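/- arXiv:2206.02863 — 7 statements merged into one kernel-verified Lean document; each statement's English description precedes it below -/
import Mathlib

section
/- Let n be a positive integer and let M be an n×n real matrix. Then there exists a real n×n matrix R with operator norm at most 1 such that ‖M ∘ R‖ = ‖M‖_S. In other words, the supremum defining the Schur norm of a real matrix (taken over all complex contractions) is attained at a real contraction. -/
set_option synthInstance.maxHeartbeats 1000000
set_option maxHeartbeats 1000000

open scoped ComplexOrder

/-- The operator norm (induced by Euclidean norms) of a complex matrix. -/
noncomputable def Matrix.copNorm {m n : Type*} [Fintype m] [Fintype n] [DecidableEq n]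
    (M : Matrix m n ℂ) : ℝ :=
  ‖LinearMap.toContinuousLinearMap (Matrix.toEuclideanLin M)‖

/-- The operator norm (induced by Euclidean norms) of a real matrix. -/
noncomputable def Matrix.ropNorm {m n : Type*} [Fintype m] [Fintype n] [DecidableEq n]
    (M : Matrix m n ℝ) : ℝ :=
  ‖LinearMap.toContinuousLinearMap (Matrix.toEuclideanLin M)‖

/-- The Schur norm of a complex square matrix: the supremum of `‖M ∘ C‖` over all
complex contractions `C`, where `∘` is the entrywise (Schur/Hadamard) product. -/
noncomputable def Matrix.schurNorm {n : Type*} [Fintype n] [DecidableEq n]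
    (M : Matrix n n ℂ) : ℝ :=
  sSup {x | ∃ C : Matrix n n ℂ, Matrix.copNorm C ≤ 1 ∧ x = Matrix.copNorm (Matrix.hadamard M C)}

/-- `rSchur n`: the supremum of Schur norms of `n × n` real matrices whose entries all have
absolute value at most `1`. -/
noncomputable def rSchur (n : ℕ) : ℝ :=
  sSup {x | ∃ M : Matrix (Fin n) (Fin n) ℝ, (∀ i j, |M i j| ≤ 1) ∧
    x = Matrix.schurNorm (M.map Complex.ofReal)}

namespace SchurAux

open Matrix Complex
open scoped InnerProductSpace

lemma sqle {a b : ℝ} (hb : 0 ≤ b) (h : a ^ 2 ≤ b ^ 2) (ha : 0 ≤ a) : a ≤ b := by nlinarith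

lemma sqeq {a b : ℝ} (ha : 0 ≤ a) (hb : 0 ≤ b) (h : a ^ 2 = b ^ 2) : a = b :=
  le_antisymm (sqle hb h.le ha) (sqle ha (le_of_eq h.symm) hb)

variable {n : ℕ}

/-- The CLM associated to a matrix. -/
noncomputable abbrev T {𝕜 : Type*} [RCLike 𝕜] (A : Matrix (Fin n) (Fin n) 𝕜) :
    EuclideanSpace 𝕜 (Fin n) →L[𝕜] EuclideanSpace 𝕜 (Fin n) :=
  LinearMap.toContinuousLinearMap (Matrix.toEuclideanLin A)

lemma copNorm_T (A : Matrix (Fin n) (Fin n) ℂ) : A.copNorm = ‖T A‖ := rfl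
lemma ropNorm_T (A : Matrix (Fin n) (Fin n) ℝ) : A.ropNorm = ‖T A‖ := rfl

lemma T_apply {𝕜 : Type*} [RCLike 𝕜] (A : Matrix (Fin n) (Fin n) 𝕜)
    (v : EuclideanSpace 𝕜 (Fin n)) (i : Fin n) : T A v i = ∑ j, A i j * v j := rfl

section basic
variable {𝕜 : Type*} [RCLike 𝕜]

lemma coord_le (x : EuclideanSpace 𝕜 (Fin n)) (i : Fin n) : ‖x i‖ ≤ ‖x‖ := by
  refine sqle (norm_nonneg _) ?_ (norm_nonneg _)
  rw [PiLp.norm_sq_eq_of_L2]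
  exact Finset.single_le_sum (fun j _ => sq_nonneg ‖x j‖) (Finset.mem_univ i)

lemma entry_le (A : Matrix (Fin n) (Fin n) 𝕜) (i j : Fin n) : ‖A i j‖ ≤ ‖T A‖ := by
  have h1 : ‖A i j‖ ≤ ‖T A (EuclideanSpace.single j (1:𝕜))‖ := by
    have : A i j = T A (EuclideanSpace.single j (1:𝕜)) i := by
      rw [T_apply]; simp [EuclideanSpace.single_apply]
    rw [this]; exact coord_le _ i
  refine h1.trans ?_
  calc ‖T A (EuclideanSpace.single j (1:𝕜))‖ ≤ ‖T A‖ * ‖EuclideanSpace.single j (1:𝕜)‖ :=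
        (T A).le_opNorm _
    _ = ‖T A‖ := by rw [EuclideanSpace.norm_single, norm_one, mul_one]

lemma norm_T_le_sum (A : Matrix (Fin n) (Fin n) 𝕜) : ‖T A‖ ≤ ∑ i, ∑ j, ‖A i j‖ := by
  refine ContinuousLinearMap.opNorm_le_bound _
    (Finset.sum_nonneg fun _ _ => Finset.sum_nonneg fun _ _ => norm_nonneg _) fun v => ?_
  have h1 : ‖T A v‖ ≤ ∑ i, ‖T A v i‖ := by
    refine sqle (Finset.sum_nonneg fun _ _ => norm_nonneg _) ?_ (norm_nonneg _)
    rw [PiLp.norm_sq_eq_of_L2]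
    exact Finset.sum_sq_le_sq_sum_of_nonneg fun _ _ => norm_nonneg _
  refine h1.trans ?_
  rw [Finset.sum_mul]
  refine Finset.sum_le_sum fun i _ => ?_
  rw [T_apply, Finset.sum_mul]
  refine (norm_sum_le _ _).trans (Finset.sum_le_sum fun j _ => ?_)
  rw [norm_mul]
  exact mul_le_mul_of_nonneg_left (coord_le v j) (norm_nonneg _)

end basic

/-- entrywise real part after unimodular phase rotations is a contraction -/
lemma re_phase (X : Matrix (Fin n) (Fin n) ℂ) (φ ψ : Fin n → ℂ)
    (hφ : ∀ i, ‖φ i‖ = 1) (hψ : ∀ j, ‖ψ j‖ = 1) :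
    ‖T (Matrix.of fun i j => (φ i * X i j * ψ j).re)‖ ≤ ‖T X‖ := by
  refine ContinuousLinearMap.opNorm_le_bound _ (norm_nonneg _) fun b => ?_
  set R : Matrix (Fin n) (Fin n) ℝ := Matrix.of fun i j => (φ i * X i j * ψ j).re with hR
  set w : EuclideanSpace ℂ (Fin n) := (WithLp.equiv 2 _).symm (fun j => ψ j * (b j : ℂ)) with hw
  have hwb : ‖w‖ = ‖b‖ := by
    have : ‖w‖ ^ 2 = ‖b‖ ^ 2 := by
      rw [PiLp.norm_sq_eq_of_L2, PiLp.norm_sq_eq_of_L2]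
      refine Finset.sum_congr rfl fun j _ => ?_
      have : ‖w j‖ = ‖b j‖ := by
        show ‖ψ j * (b j : ℂ)‖ = _
        rw [norm_mul, hψ j, one_mul, Complex.norm_real]
      rw [this]
    nlinarith [norm_nonneg w, norm_nonneg b]
  have key : ∀ i, T R b i = (φ i * T X w i).re := by
    intro i
    rw [T_apply, T_apply]
    rw [Finset.mul_sum, Complex.re_sum]
    refine Finset.sum_congr rfl fun j _ => ?_
    show (φ i * X i j * ψ j).re * b j = (φ i * (X i j * (ψ j * (b j : ℂ)))).re
    have : φ i * (X i j * (ψ j * (b j : ℂ))) = (b j : ℂ) * (φ i * X i j * ψ j) := by ring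
    rw [this, Complex.re_ofReal_mul, mul_comm]
  have h2 : ‖T R b‖ ^ 2 ≤ (‖T X‖ * ‖b‖) ^ 2 := by
    rw [PiLp.norm_sq_eq_of_L2]
    have h3 : ∀ i, ‖T R b i‖ ^ 2 ≤ ‖T X w i‖ ^ 2 := by
      intro i
      rw [key i]
      have h0 := Complex.abs_re_le_norm (φ i * T X w i)
      have h4 : ‖φ i * T X w i‖ = ‖T X w i‖ := by rw [norm_mul, hφ i, one_mul]
      rw [Real.norm_eq_abs]
      nlinarith [norm_nonneg (T X w i), abs_nonneg (φ i * T X w i).re]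
    calc ∑ i, ‖T R b i‖ ^ 2 ≤ ∑ i, ‖T X w i‖ ^ 2 := Finset.sum_le_sum fun i _ => h3 i
      _ = ‖T X w‖ ^ 2 := (PiLp.norm_sq_eq_of_L2 _ _).symm
      _ ≤ (‖T X‖ * ‖w‖) ^ 2 := by
          have := (T X).le_opNorm w
          nlinarith [norm_nonneg (T X w), mul_nonneg (norm_nonneg (T X)) (norm_nonneg w)]
      _ = (‖T X‖ * ‖b‖) ^ 2 := by rw [hwb]
  exact sqle (mul_nonneg (norm_nonneg _) (norm_nonneg _)) h2 (norm_nonneg _)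

lemma map_norm_eq (R : Matrix (Fin n) (Fin n) ℝ) :
    ‖T (R.map Complex.ofReal)‖ = ‖T R‖ := by
  refine le_antisymm ?_ ?_
  · refine ContinuousLinearMap.opNorm_le_bound _ (norm_nonneg _) fun v => ?_
    set a : EuclideanSpace ℝ (Fin n) := (WithLp.equiv 2 _).symm (fun j => (v j).re) with ha
    set b : EuclideanSpace ℝ (Fin n) := (WithLp.equiv 2 _).symm (fun j => (v j).im) with hb
    have key : ∀ i, T (R.map Complex.ofReal) v i = Complex.mk (T R a i) (T R b i) := by
      intro i
      rw [T_apply, T_apply, T_apply]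
      rw [Complex.ext_iff]
      constructor
      · rw [Complex.re_sum, Finset.sum_congr rfl fun j _ => ?_]
        show (R i j * v j : ℂ).re = R i j * (v j).re
        rw [Complex.re_ofReal_mul]
      · rw [Complex.im_sum, Finset.sum_congr rfl fun j _ => ?_]
        show (R i j * v j : ℂ).im = R i j * (v j).im
        rw [Complex.im_ofReal_mul]
    have h2 : ‖T (R.map Complex.ofReal) v‖ ^ 2 ≤ (‖T R‖ * ‖v‖) ^ 2 := by
      rw [PiLp.norm_sq_eq_of_L2]
      have e1 : ∀ i, ‖T (R.map Complex.ofReal) v i‖ ^ 2 = ‖T R a i‖ ^ 2 + ‖T R b i‖ ^ 2 := by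
        intro i
        rw [key i, Complex.sq_norm, Complex.normSq_mk,
          Real.norm_eq_abs, Real.norm_eq_abs, _root_.sq_abs, _root_.sq_abs]
        ring
      have e2 : ∑ i, ‖T (R.map Complex.ofReal) v i‖ ^ 2 = ‖T R a‖ ^ 2 + ‖T R b‖ ^ 2 := by
        rw [PiLp.norm_sq_eq_of_L2, PiLp.norm_sq_eq_of_L2, ← Finset.sum_add_distrib]
        exact Finset.sum_congr rfl fun i _ => e1 i
      have e3 : ‖v‖ ^ 2 = ‖a‖ ^ 2 + ‖b‖ ^ 2 := by
        rw [PiLp.norm_sq_eq_of_L2, PiLp.norm_sq_eq_of_L2, PiLp.norm_sq_eq_of_L2,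
          ← Finset.sum_add_distrib]
        refine Finset.sum_congr rfl fun i _ => ?_
        rw [Complex.sq_norm]
        have hai : a i = (v i).re := rfl
        have hbi : b i = (v i).im := rfl
        rw [Complex.normSq_apply, hai, hbi, Real.norm_eq_abs, Real.norm_eq_abs,
          _root_.sq_abs, _root_.sq_abs]
        ring
      rw [e2]
      have la := (T R).le_opNorm a
      have lb := (T R).le_opNorm b
      have la2 : ‖T R a‖ ^ 2 ≤ ‖T R‖ ^ 2 * ‖a‖ ^ 2 := by
        nlinarith [norm_nonneg (T R a), mul_nonneg (norm_nonneg (T R)) (norm_nonneg a)]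
      have lb2 : ‖T R b‖ ^ 2 ≤ ‖T R‖ ^ 2 * ‖b‖ ^ 2 := by
        nlinarith [norm_nonneg (T R b), mul_nonneg (norm_nonneg (T R)) (norm_nonneg b)]
      nlinarith [e3, sq_nonneg ‖T R‖]
    exact sqle (mul_nonneg (norm_nonneg _) (norm_nonneg _)) h2 (norm_nonneg _)
  · refine ContinuousLinearMap.opNorm_le_bound _ (norm_nonneg _) fun b => ?_
    set bc : EuclideanSpace ℂ (Fin n) := (WithLp.equiv 2 _).symm (fun j => (b j : ℂ)) with hbc
    have hb : ‖bc‖ = ‖b‖ := by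
      have : ‖bc‖ ^ 2 = ‖b‖ ^ 2 := by
        rw [PiLp.norm_sq_eq_of_L2, PiLp.norm_sq_eq_of_L2]
        exact Finset.sum_congr rfl fun j _ => by
          show ‖(b j : ℂ)‖ ^ 2 = _; rw [Complex.norm_real]
      nlinarith [norm_nonneg bc, norm_nonneg b]
    have key : ∀ i, (T R b i : ℂ) = T (R.map Complex.ofReal) bc i := by
      intro i
      rw [T_apply, T_apply]
      push_cast
      rfl
    have h2 : ‖T R b‖ ^ 2 ≤ (‖T (R.map Complex.ofReal)‖ * ‖b‖) ^ 2 := by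
      rw [PiLp.norm_sq_eq_of_L2]
      calc ∑ i, ‖T R b i‖ ^ 2 = ∑ i, ‖T (R.map Complex.ofReal) bc i‖ ^ 2 := by
            refine Finset.sum_congr rfl fun i _ => ?_
            rw [← key i, Complex.norm_real]
        _ = ‖T (R.map Complex.ofReal) bc‖ ^ 2 := (PiLp.norm_sq_eq_of_L2 _ _).symm
        _ ≤ (‖T (R.map Complex.ofReal)‖ * ‖b‖) ^ 2 := by
            have := (T (R.map Complex.ofReal)).le_opNorm bc
            rw [hb] at this
            nlinarith [norm_nonneg (T (R.map Complex.ofReal) bc),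
              mul_nonneg (norm_nonneg (T (R.map Complex.ofReal))) (norm_nonneg b)]
    exact sqle (mul_nonneg (norm_nonneg _) (norm_nonneg _)) h2 (norm_nonneg _)

/-- The linear equivalence between matrices and CLMs. -/
noncomputable def L : Matrix (Fin n) (Fin n) ℂ ≃ₗ[ℂ]
    (EuclideanSpace ℂ (Fin n) →L[ℂ] EuclideanSpace ℂ (Fin n)) :=
  Matrix.toEuclideanLin.trans LinearMap.toContinuousLinearMap

lemma copNorm_eq_L (A : Matrix (Fin n) (Fin n) ℂ) : A.copNorm = ‖L A‖ := rfl

def schurSet (M : Matrix (Fin n) (Fin n) ℂ) : Set ℝ :=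
  {x | ∃ C : Matrix (Fin n) (Fin n) ℂ, Matrix.copNorm C ≤ 1 ∧
    x = Matrix.copNorm (Matrix.hadamard M C)}

lemma schurNorm_eq_sSup (M : Matrix (Fin n) (Fin n) ℂ) :
    M.schurNorm = sSup (schurSet M) := rfl

lemma copNorm_zero : (Matrix.copNorm (0 : Matrix (Fin n) (Fin n) ℂ)) = 0 := by
  rw [copNorm_eq_L, map_zero, norm_zero]

lemma schurSet_nonempty (M : Matrix (Fin n) (Fin n) ℂ) : (schurSet M).Nonempty :=
  ⟨Matrix.copNorm (Matrix.hadamard M 0), 0, by rw [copNorm_zero]; exact zero_le_one, rfl⟩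

lemma schurSet_bddAbove (M : Matrix (Fin n) (Fin n) ℂ) : BddAbove (schurSet M) := by
  refine ⟨∑ i, ∑ j, ‖M i j‖, fun x hx => ?_⟩
  obtain ⟨C, hC, rfl⟩ := hx
  refine (norm_T_le_sum _).trans ?_
  refine Finset.sum_le_sum fun i _ => Finset.sum_le_sum fun j _ => ?_
  rw [Matrix.hadamard_apply, norm_mul]
  calc ‖M i j‖ * ‖C i j‖ ≤ ‖M i j‖ * 1 :=
        mul_le_mul_of_nonneg_left (le_trans (entry_le C i j) hC) (norm_nonneg _)
    _ = ‖M i j‖ := mul_one _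

lemma le_schurNorm (M : Matrix (Fin n) (Fin n) ℂ) {C : Matrix (Fin n) (Fin n) ℂ}
    (hC : Matrix.copNorm C ≤ 1) :
    Matrix.copNorm (Matrix.hadamard M C) ≤ M.schurNorm :=
  le_csSup (schurSet_bddAbove M) ⟨C, hC, rfl⟩

/-- hadamard multiplication as a linear map -/
noncomputable def hadLin (M : Matrix (Fin n) (Fin n) ℂ) :
    Matrix (Fin n) (Fin n) ℂ →ₗ[ℂ] Matrix (Fin n) (Fin n) ℂ where
  toFun C := Matrix.hadamard M C
  map_add' C D := by ext i j; simp [Matrix.hadamard_apply, mul_add]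
  map_smul' c C := by ext i j; simp [Matrix.hadamard_apply]; ring

lemma schur_attained (M : Matrix (Fin n) (Fin n) ℂ) :
    ∃ C : Matrix (Fin n) (Fin n) ℂ, Matrix.copNorm C ≤ 1 ∧
      Matrix.schurNorm M = Matrix.copNorm (Matrix.hadamard M C) := by
  classical
  set E := EuclideanSpace ℂ (Fin n)
  haveI : ProperSpace (E →L[ℂ] E) := FiniteDimensional.proper ℂ _
  set Φ : (E →L[ℂ] E) →ₗ[ℂ] (E →L[ℂ] E) :=
    (L.toLinearMap.comp (hadLin M)).comp L.symm.toLinearMap with hΦ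
  have hΦc : Continuous Φ := Φ.continuous_of_finiteDimensional
  have hf : Continuous fun X : E →L[ℂ] E => ‖Φ X‖ := hΦc.norm
  have hcpt : IsCompact (Metric.closedBall (0 : E →L[ℂ] E) 1) := isCompact_closedBall _ _
  obtain ⟨X₀, hX₀mem, hX₀max⟩ := hcpt.exists_isMaxOn ⟨0, Metric.mem_closedBall_self zero_le_one⟩
    hf.continuousOn
  refine ⟨L.symm X₀, ?_, ?_⟩
  · rw [copNorm_eq_L, L.apply_symm_apply]
    exact mem_closedBall_zero_iff.mp hX₀mem
  · have key : ∀ C : Matrix (Fin n) (Fin n) ℂ, Matrix.copNorm (Matrix.hadamard M C) =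
        ‖Φ (L C)‖ := by
      intro C
      rw [copNorm_eq_L]
      simp [hΦ, hadLin]
    have hle : ∀ x ∈ schurSet M, x ≤ Matrix.copNorm (Matrix.hadamard M (L.symm X₀)) := by
      rintro x ⟨C, hC, rfl⟩
      rw [key C, key (L.symm X₀), L.apply_symm_apply]
      exact hX₀max (mem_closedBall_zero_iff.mpr (by rw [← copNorm_eq_L]; exact hC))
    have hmem : Matrix.copNorm (Matrix.hadamard M (L.symm X₀)) ∈ schurSet M :=
      ⟨L.symm X₀, by rw [copNorm_eq_L, L.apply_symm_apply]
                     exact mem_closedBall_zero_iff.mp hX₀mem, rfl⟩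
    exact le_antisymm (csSup_le (schurSet_nonempty M) hle)
      (le_csSup (schurSet_bddAbove M) hmem)

/-- norm of a CLM on a finite-dimensional space is attained on the closed unit ball -/
lemma norm_attained (N : Matrix (Fin n) (Fin n) ℂ) :
    ∃ v : EuclideanSpace ℂ (Fin n), ‖v‖ ≤ 1 ∧ ‖T N v‖ = ‖T N‖ := by
  have hcpt : IsCompact (Metric.closedBall (0 : EuclideanSpace ℂ (Fin n)) 1) :=
    isCompact_closedBall _ _
  obtain ⟨v, hvmem, hvmax⟩ := hcpt.exists_isMaxOn ⟨0, Metric.mem_closedBall_self zero_le_one⟩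
    ((T N).continuous.norm.continuousOn)
  have hv1 : ‖v‖ ≤ 1 := mem_closedBall_zero_iff.mp hvmem
  refine ⟨v, hv1, le_antisymm ((T N).le_opNorm v |>.trans (by nlinarith [norm_nonneg (T N)])) ?_⟩
  refine ContinuousLinearMap.opNorm_le_bound _ (norm_nonneg _) fun w => ?_
  rcases eq_or_ne w 0 with rfl | hw
  · simp
  · have hnw : (0:ℝ) < ‖w‖ := norm_pos_iff.mpr hw
    set w' : EuclideanSpace ℂ (Fin n) := ((‖w‖ : ℂ))⁻¹ • w with hw'
    have hw'n : ‖w'‖ = 1 := by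
      rw [hw', norm_smul, norm_inv, Complex.norm_real, Real.norm_eq_abs,
        abs_of_pos hnw, inv_mul_cancel₀ hnw.ne']
    have hmem' : w' ∈ Metric.closedBall (0 : EuclideanSpace ℂ (Fin n)) 1 :=
      mem_closedBall_zero_iff.mpr hw'n.le
    have : ‖T N w'‖ ≤ ‖T N v‖ := hvmax hmem'
    have hTw' : ‖T N w'‖ = ‖w‖⁻¹ * ‖T N w‖ := by
      rw [hw', _root_.map_smul, norm_smul, norm_inv, Complex.norm_real, Real.norm_eq_abs,
        abs_of_pos hnw]
    rw [hTw'] at this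
    calc ‖T N w‖ = (‖w‖⁻¹ * ‖T N w‖) * ‖w‖ := by field_simp
      _ ≤ ‖T N v‖ * ‖w‖ := mul_le_mul_of_nonneg_right this hnw.le

lemma hadamard_map_ofReal (M R : Matrix (Fin n) (Fin n) ℝ) :
    (Matrix.hadamard M R).map Complex.ofReal =
      Matrix.hadamard (M.map Complex.ofReal) (R.map Complex.ofReal) := by
  ext i j
  simp [Matrix.hadamard_apply, Matrix.map_apply]

end SchurAux

open Matrix Complex SchurAux
open scoped InnerProductSpace

/-- For any real square matrix `M`, the Schur norm (defined as a supremum over all complex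
contractions) is attained at a real contraction `R`. -/
theorem real_witness_for_schur_norm (n : ℕ) (hn : 0 < n) (M : Matrix (Fin n) (Fin n) ℝ) :
    ∃ R : Matrix (Fin n) (Fin n) ℝ, Matrix.ropNorm R ≤ 1 ∧
      Matrix.ropNorm (Matrix.hadamard M R) = Matrix.schurNorm (M.map Complex.ofReal) := by
  classical
  obtain ⟨C, hC, hSch⟩ := SchurAux.schur_attained (M.map Complex.ofReal)
  set Mc : Matrix (Fin n) (Fin n) ℂ := M.map Complex.ofReal with hMc
  set N : Matrix (Fin n) (Fin n) ℂ := Matrix.hadamard Mc C with hN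
  clear_value Mc N
  have hT0 : T (0 : Matrix (Fin n) (Fin n) ℝ) = 0 := by
    ext w i
    rw [T_apply]
    simp
  by_cases h0 : Matrix.copNorm N = 0
  · refine ⟨0, ?_, ?_⟩
    · rw [ropNorm_T, hT0, norm_zero]; exact zero_le_one
    · rw [Matrix.hadamard_zero, hSch, h0, ropNorm_T, hT0, norm_zero]
  · obtain ⟨v, hv1, hv2⟩ := SchurAux.norm_attained N
    have hTN : Matrix.copNorm N = ‖T N‖ := rfl
    have hTvpos : 0 < ‖T N v‖ := by
      rw [hv2, ← hTN]
      exact lt_of_le_of_ne (by rw [hTN]; exact norm_nonneg _) (Ne.symm h0)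
    set s : ℝ := ‖T N v‖ with hs
    set u : EuclideanSpace ℂ (Fin n) := ((s : ℂ))⁻¹ • (T N v) with hu
    have hunorm : ‖u‖ = 1 := by
      rw [hu, norm_smul, norm_inv, Complex.norm_real, Real.norm_eq_abs, abs_of_pos hTvpos,
        ← hs, inv_mul_cancel₀ hTvpos.ne']
    have hsne : (s : ℂ) ≠ 0 := by exact_mod_cast hTvpos.ne'
    have hinner : ⟪u, T N v⟫_ℂ = (s : ℂ) := by
      rw [hu, inner_smul_left, inner_self_eq_norm_sq_to_K]
      rw [map_inv₀, Complex.conj_ofReal, ← hs, pow_two]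
      field_simp
      rfl
    clear_value s u
    clear hu hs
    set φ : Fin n → ℂ := fun i => if u i = 0 then 1 else (starRingEnd ℂ) (u i) / ‖u i‖ with hφdef
    set ψ : Fin n → ℂ := fun j => if v j = 0 then 1 else v j / ‖v j‖ with hψdef
    have hφ : ∀ i, ‖φ i‖ = 1 := by
      intro i
      rw [hφdef]
      by_cases h : u i = 0
      · simp [h]
      · have hne : ‖u i‖ ≠ 0 := norm_ne_zero_iff.mpr h
        simp only [h, if_false, norm_div, RCLike.norm_conj, Complex.norm_real,
          Real.norm_eq_abs, _root_.abs_of_nonneg (norm_nonneg (u i))]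
        exact div_self hne
    have hψ : ∀ j, ‖ψ j‖ = 1 := by
      intro j
      rw [hψdef]
      by_cases h : v j = 0
      · simp [h]
      · have hne : ‖v j‖ ≠ 0 := norm_ne_zero_iff.mpr h
        simp only [h, if_false, norm_div, Complex.norm_real,
          Real.norm_eq_abs, _root_.abs_of_nonneg (norm_nonneg (v j))]
        exact div_self hne
    set R : Matrix (Fin n) (Fin n) ℝ := Matrix.of fun i j => (φ i * C i j * ψ j).re with hRdef
    have hRnorm : Matrix.ropNorm R ≤ 1 := by
      rw [ropNorm_T]
      exact (SchurAux.re_phase C φ ψ hφ hψ).trans hC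
    -- entrywise key identity
    have hkey : ∀ i j, ‖u i‖ * ((Matrix.hadamard M R) i j * ‖v j‖) =
        ((starRingEnd ℂ) (u i) * (N i j * v j)).re := by
      intro i j
      have hMR : (Matrix.hadamard M R) i j = (φ i * N i j * ψ j).re := by
        rw [Matrix.hadamard_apply, hRdef]
        show M i j * (φ i * C i j * ψ j).re = _
        have : φ i * N i j * ψ j = (M i j : ℂ) * (φ i * C i j * ψ j) := by
          rw [hN, Matrix.hadamard_apply, hMc, Matrix.map_apply]; ring
        rw [this, Complex.re_ofReal_mul]
      rw [hMR]
      by_cases hui : u i = 0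
      · simp [hui]
      by_cases hvj : v j = 0
      · simp [hvj]
      have hnu : (0:ℝ) < ‖u i‖ := norm_pos_iff.mpr hui
      have hnv : (0:ℝ) < ‖v j‖ := norm_pos_iff.mpr hvj
      have ha' : ((‖u i‖ : ℝ) : ℂ) ≠ 0 := by exact_mod_cast hnu.ne'
      have hb' : ((‖v j‖ : ℝ) : ℂ) ≠ 0 := by exact_mod_cast hnv.ne'
      have hident : φ i * N i j * ψ j =
          ((starRingEnd ℂ) (u i) * (N i j * v j)) / ((‖u i‖ * ‖v j‖ : ℝ) : ℂ) := by
        rw [hφdef, hψdef]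
        simp only [hui, hvj, if_false]
        push_cast
        field_simp
      rw [hident, Complex.div_ofReal_re]
      have halg : ∀ r x y : ℝ, x ≠ 0 → y ≠ 0 → x * (r / (x * y) * y) = r := by
        intro r x y hx hy
        field_simp
        try ring
      exact halg _ _ _ hnu.ne' hnv.ne'
    clear_value R φ ψ
    -- vectors of absolute values
    set a : EuclideanSpace ℝ (Fin n) := (WithLp.equiv 2 _).symm (fun i => ‖u i‖) with hadef
    set b : EuclideanSpace ℝ (Fin n) := (WithLp.equiv 2 _).symm (fun j => ‖v j‖) with hbdef
    have hanorm : ‖a‖ = 1 := by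
      refine SchurAux.sqeq (norm_nonneg _) zero_le_one ?_
      rw [PiLp.norm_sq_eq_of_L2, one_pow]
      have : ∀ i, ‖a i‖ ^ 2 = ‖u i‖ ^ 2 := fun i => by
        show ‖‖u i‖‖ ^ 2 = _; rw [norm_norm]
      rw [Finset.sum_congr rfl fun i _ => this i, ← PiLp.norm_sq_eq_of_L2, hunorm, one_pow]
    have hbnorm : ‖b‖ ≤ 1 := by
      refine SchurAux.sqle zero_le_one ?_ (norm_nonneg _)
      rw [PiLp.norm_sq_eq_of_L2, one_pow]
      have : ∀ j, ‖b j‖ ^ 2 = ‖v j‖ ^ 2 := fun j => by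
        show ‖‖v j‖‖ ^ 2 = _; rw [norm_norm]
      rw [Finset.sum_congr rfl fun j _ => this j, ← PiLp.norm_sq_eq_of_L2]
      nlinarith [norm_nonneg v]
    -- the inner product computation
    have hip : ⟪a, T (Matrix.hadamard M R) b⟫_ℝ = s := by
      have e1 : ⟪a, T (Matrix.hadamard M R) b⟫_ℝ =
          ∑ i, ∑ j, ‖u i‖ * ((Matrix.hadamard M R) i j * ‖v j‖) := by
        rw [PiLp.inner_apply]
        refine Finset.sum_congr rfl fun i _ => ?_
        simp only [RCLike.inner_apply, starRingEnd_apply, star_trivial]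
        rw [T_apply, Finset.sum_mul]
        exact Finset.sum_congr rfl fun j _ => mul_comm _ _
      have e2 : (⟪u, T N v⟫_ℂ).re = ∑ i, ∑ j, ((starRingEnd ℂ) (u i) * (N i j * v j)).re := by
        rw [PiLp.inner_apply, Complex.re_sum]
        refine Finset.sum_congr rfl fun i _ => ?_
        have : ⟪u i, T N v i⟫_ℂ = (starRingEnd ℂ) (u i) * (T N v i) := by
          simp [RCLike.inner_apply]
          ring
        rw [this, T_apply, Finset.mul_sum, Complex.re_sum]
      rw [e1, Finset.sum_congr rfl fun i _ => Finset.sum_congr rfl fun j _ => hkey i j, ← e2,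
        hinner, Complex.ofReal_re]
    clear_value a b
    clear hadef hbdef
    -- lower bound
    have hlow : s ≤ Matrix.ropNorm (Matrix.hadamard M R) := by
      have h1 : s ≤ ‖T (Matrix.hadamard M R) b‖ := by
        rw [← hip]
        calc ⟪a, T (Matrix.hadamard M R) b⟫_ℝ ≤ ‖a‖ * ‖T (Matrix.hadamard M R) b‖ :=
              real_inner_le_norm _ _
          _ = ‖T (Matrix.hadamard M R) b‖ := by rw [hanorm, one_mul]
      refine h1.trans ?_
      calc ‖T (Matrix.hadamard M R) b‖ ≤ ‖T (Matrix.hadamard M R)‖ * ‖b‖ :=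
            (T (Matrix.hadamard M R)).le_opNorm b
        _ ≤ ‖T (Matrix.hadamard M R)‖ * 1 :=
            mul_le_mul_of_nonneg_left hbnorm (norm_nonneg _)
        _ = Matrix.ropNorm (Matrix.hadamard M R) := by rw [mul_one, ropNorm_T]
    -- upper bound
    have hup : Matrix.ropNorm (Matrix.hadamard M R) ≤ Matrix.schurNorm Mc := by
      have e : Matrix.ropNorm (Matrix.hadamard M R) =
          Matrix.copNorm (Matrix.hadamard Mc (R.map Complex.ofReal)) := by
        rw [ropNorm_T, copNorm_T, hMc, ← SchurAux.hadamard_map_ofReal, map_norm_eq]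
      rw [e]
      refine SchurAux.le_schurNorm Mc ?_
      rw [copNorm_T, map_norm_eq, ← ropNorm_T]
      exact hRnorm
    refine ⟨R, hRnorm, le_antisymm hup ?_⟩
    rw [hSch, hTN, ← hv2]
    exact hlow
end

section
/- Let n be a positive integer and let M be an n×n complex matrix. Then there exists a unitary n×n matrix U such that ‖M ∘ U‖ = ‖M‖_S. -/
open scoped ComplexOrder

section Aux
open scoped Matrix.Norms.L2Operator InnerProductSpace
open Matrix

variable {n : ℕ}

lemma scalar_key {e s d : ℝ} (he2 : e ^ 2 = d) (hs2 : s ^ 2 = 1 - d) (he : e ≠ 0) :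
    star (((e : ℂ) + Complex.I * (s : ℂ)) * (e : ℂ)⁻¹) * (d : ℂ) *
      (((e : ℂ) + Complex.I * (s : ℂ)) * (e : ℂ)⁻¹) = 1 := by
  have he' : (e : ℂ) ≠ 0 := Complex.ofReal_ne_zero.mpr he
  have he2c : (e : ℂ) ^ 2 = (d : ℂ) := by exact_mod_cast congrArg Complex.ofReal he2
  have hs2c : (s : ℂ) ^ 2 = 1 - (d : ℂ) := by
    have := congrArg Complex.ofReal hs2
    push_cast at this ⊢
    exact this
  have hd' : (d : ℂ) ≠ 0 := by
    rw [← he2c]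
    exact pow_ne_zero _ he'
  have hstar : star (((e : ℂ) + Complex.I * (s : ℂ)) * (e : ℂ)⁻¹) =
      ((e : ℂ) - Complex.I * (s : ℂ)) * (e : ℂ)⁻¹ := by
    simp only [star_mul', star_add, Complex.star_def, map_inv₀, _root_.map_mul,
      Complex.conj_ofReal, Complex.conj_I]
    ring
  rw [hstar]
  have key : ((e : ℂ) - Complex.I * s) * ((e : ℂ) + Complex.I * s) = 1 := by
    have h : ((e : ℂ) - Complex.I * s) * ((e : ℂ) + Complex.I * s)
        = (e : ℂ) ^ 2 - Complex.I ^ 2 * (s : ℂ) ^ 2 := by ring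
    rw [h, Complex.I_sq, he2c, hs2c]
    ring
  calc ((e : ℂ) - Complex.I * s) * (e : ℂ)⁻¹ * (d : ℂ) * (((e : ℂ) + Complex.I * s) * (e : ℂ)⁻¹)
      = (((e : ℂ) - Complex.I * s) * ((e : ℂ) + Complex.I * s)) * ((d : ℂ) * ((e : ℂ) * (e : ℂ))⁻¹)
        := by rw [mul_inv]; ring
    _ = (d : ℂ) * ((d : ℂ))⁻¹ := by rw [key, one_mul, ← pow_two, he2c]
    _ = 1 := mul_inv_cancel₀ hd'

lemma scalar_sum {e s : ℝ} (he : e ≠ 0) :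
    (((e : ℂ) + Complex.I * (s : ℂ)) * (e : ℂ)⁻¹) +
      (((e : ℂ) + Complex.I * ((-s : ℝ) : ℂ)) * (e : ℂ)⁻¹) = 2 := by
  have he' : (e : ℂ) ≠ 0 := Complex.ofReal_ne_zero.mpr he
  push_cast
  field_simp
  ring



lemma copNorm_eq_l2 (A : Matrix (Fin n) (Fin n) ℂ) : Matrix.copNorm A = ‖A‖ := rfl

lemma norm_one_matrix (hn : 0 < n) : ‖(1 : Matrix (Fin n) (Fin n) ℂ)‖ = 1 := by
  haveI : Nonempty (Fin n) := ⟨⟨0, hn⟩⟩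
  haveI : Nontrivial (Matrix (Fin n) (Fin n) ℂ) := Matrix.nonempty
  exact CStarRing.norm_one

lemma norm_unitary (hn : 0 < n) {U : Matrix (Fin n) (Fin n) ℂ} (h : Uᴴ * U = 1) : ‖U‖ = 1 := by
  have h2 : ‖U‖ * ‖U‖ = 1 := by
    rw [← Matrix.l2_opNorm_conjTranspose_mul_self, h, norm_one_matrix hn]
  nlinarith [norm_nonneg U]

lemma eigen_eq_norm_sq {C : Matrix (Fin n) (Fin n) ℂ} (hH : (Cᴴ * C).IsHermitian) (j : Fin n) :
    hH.eigenvalues j = ‖toEuclideanCLM (𝕜 := ℂ) C (hH.eigenvectorBasis j)‖ ^ 2 := by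
  set T := toEuclideanCLM (𝕜 := ℂ) C with hT
  set v := hH.eigenvectorBasis j with hv
  have hv1 : ‖v‖ = 1 := hH.eigenvectorBasis.orthonormal.1 j
  have h1 : toEuclideanCLM (𝕜 := ℂ) (Cᴴ * C) v = (hH.eigenvalues j : ℂ) • v := by
    have hm := hH.mulVec_eigenvectorBasis j
    apply (WithLp.equiv 2 (Fin n → ℂ)).injective
    show (Cᴴ * C) *ᵥ WithLp.equiv 2 (Fin n → ℂ) v = WithLp.equiv 2 (Fin n → ℂ) ((hH.eigenvalues j : ℂ) • v)
    rw [show WithLp.equiv 2 (Fin n → ℂ) v = ⇑v from rfl, hm]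
    ext i
    simp [Complex.real_smul, hv]
  have h2 : ((hH.eigenvalues j : ℝ) : ℂ) = ⟪v, toEuclideanCLM (𝕜 := ℂ) (Cᴴ * C) v⟫_ℂ := by
    rw [h1, inner_smul_right, inner_self_eq_norm_sq_to_K, hv1]
    simp
  have h3 : toEuclideanCLM (𝕜 := ℂ) (Cᴴ * C) = star T * T := by
    rw [hT, ← map_star, ← _root_.map_mul, Matrix.star_eq_conjTranspose]
  have h4 : ⟪v, (star T * T) v⟫_ℂ = (‖T v‖ : ℂ) ^ 2 := by
    rw [ContinuousLinearMap.mul_apply, ContinuousLinearMap.star_eq_adjoint,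
      ContinuousLinearMap.adjoint_inner_right, inner_self_eq_norm_sq_to_K]
    norm_num
  rw [h3, h4] at h2
  exact_mod_cast h2

lemma eigen_le_one {C : Matrix (Fin n) (Fin n) ℂ} (hC : ‖C‖ ≤ 1)
    (hH : (Cᴴ * C).IsHermitian) (j : Fin n) : hH.eigenvalues j ≤ 1 := by
  rw [eigen_eq_norm_sq hH j]
  have h := (toEuclideanCLM (𝕜 := ℂ) C).le_opNorm (hH.eigenvectorBasis j)
  rw [hH.eigenvectorBasis.orthonormal.1 j, mul_one] at h
  have hnorm : ‖toEuclideanCLM (𝕜 := ℂ) C‖ = ‖C‖ := (Matrix.cstar_norm_def C).symm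
  rw [hnorm] at h
  nlinarith [norm_nonneg (toEuclideanCLM (𝕜 := ℂ) C (hH.eigenvectorBasis j))]

lemma eigen_pos {C : Matrix (Fin n) (Fin n) ℂ} (hCu : IsUnit C)
    (hH : (Cᴴ * C).IsHermitian) (j : Fin n) : 0 < hH.eigenvalues j := by
  rw [eigen_eq_norm_sq hH j]
  have hvne : hH.eigenvectorBasis j ≠ 0 := hH.eigenvectorBasis.orthonormal.ne_zero j
  have hTu : IsUnit (toEuclideanCLM (𝕜 := ℂ) C) := hCu.map _
  obtain ⟨u, hu⟩ := hTu
  have hne : toEuclideanCLM (𝕜 := ℂ) C (hH.eigenvectorBasis j) ≠ 0 := by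
    intro h0
    apply hvne
    have h1 : (↑u⁻¹ * (↑u : EuclideanSpace ℂ (Fin n) →L[ℂ] EuclideanSpace ℂ (Fin n)))
        (hH.eigenvectorBasis j) = hH.eigenvectorBasis j := by
      rw [u.inv_mul]
      rfl
    rw [ContinuousLinearMap.mul_apply, hu, h0, map_zero] at h1
    exact h1.symm
  exact pow_pos (norm_pos_iff.mpr hne) 2

/-- Any invertible contraction is the midpoint of two unitaries. -/
lemma exists_unitary_midpoint {C : Matrix (Fin n) (Fin n) ℂ} (hC : ‖C‖ ≤ 1) (hCu : IsUnit C) :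
    ∃ U₁ U₂ : Matrix (Fin n) (Fin n) ℂ,
      U₁ᴴ * U₁ = 1 ∧ U₂ᴴ * U₂ = 1 ∧ U₁ + U₂ = (2 : ℂ) • C := by
  classical
  have hH : (Cᴴ * C).IsHermitian := Matrix.isHermitian_conjTranspose_mul_self C
  set d : Fin n → ℝ := hH.eigenvalues with hd
  set V : Matrix (Fin n) (Fin n) ℂ := (hH.eigenvectorUnitary : Matrix (Fin n) (Fin n) ℂ)
    with hVdef
  have hV1 : Vᴴ * V = 1 := by
    have := Matrix.mem_unitaryGroup_iff'.mp hH.eigenvectorUnitary.2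
    rwa [Matrix.star_eq_conjTranspose] at this
  have hV2 : V * Vᴴ = 1 := by
    have := Matrix.mem_unitaryGroup_iff.mp hH.eigenvectorUnitary.2
    rwa [Matrix.star_eq_conjTranspose] at this
  have hspec : Cᴴ * C = V * Matrix.diagonal ((fun x : ℝ => (x : ℂ)) ∘ d) * Vᴴ := by
    have := hH.spectral_theorem
    rwa [Unitary.conjStarAlgAut_apply, Matrix.star_eq_conjTranspose] at this
  set e : Fin n → ℝ := fun j => Real.sqrt (d j) with he
  have hd0 : ∀ j, 0 < d j := fun j => eigen_pos hCu hH j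
  have hd1 : ∀ j, d j ≤ 1 := fun j => eigen_le_one hC hH j
  have he2 : ∀ j, e j ^ 2 = d j := fun j => Real.sq_sqrt (hd0 j).le
  have he0 : ∀ j, e j ≠ 0 := fun j => Real.sqrt_ne_zero'.mpr (hd0 j)
  set s : Fin n → ℝ := fun j => Real.sqrt (1 - d j) with hs
  have hs2 : ∀ j, s j ^ 2 = 1 - d j := fun j => Real.sq_sqrt (by linarith [hd1 j])
  set g₁ : Fin n → ℂ := fun j => ((e j : ℂ) + Complex.I * (s j : ℂ)) * (e j : ℂ)⁻¹ with hg₁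
  set g₂ : Fin n → ℂ := fun j => ((e j : ℂ) + Complex.I * ((-(s j) : ℝ) : ℂ)) * (e j : ℂ)⁻¹
    with hg₂
  have sandwich : ∀ a b : Fin n → ℂ,
      (V * Matrix.diagonal a * Vᴴ) * (V * Matrix.diagonal b * Vᴴ)
        = V * Matrix.diagonal (a * b) * Vᴴ := by
    intro a b
    simp only [Matrix.mul_assoc]
    rw [← Matrix.mul_assoc Vᴴ V, hV1, Matrix.one_mul,
      ← Matrix.mul_assoc (Matrix.diagonal a), Matrix.diagonal_mul_diagonal]
    rfl
  have key : ∀ g : Fin n → ℂ, (∀ j, star (g j) * (d j : ℂ) * g j = 1) →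
      (C * (V * Matrix.diagonal g * Vᴴ))ᴴ * (C * (V * Matrix.diagonal g * Vᴴ)) = 1 := by
    intro g hg
    have hWH : (V * Matrix.diagonal g * Vᴴ)ᴴ = V * Matrix.diagonal (star g) * Vᴴ := by
      simp [Matrix.conjTranspose_mul, Matrix.diagonal_conjTranspose, Matrix.mul_assoc]
    have step : (C * (V * Matrix.diagonal g * Vᴴ))ᴴ * (C * (V * Matrix.diagonal g * Vᴴ))
        = (V * Matrix.diagonal g * Vᴴ)ᴴ * (Cᴴ * C) * (V * Matrix.diagonal g * Vᴴ) := by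
      rw [Matrix.conjTranspose_mul]
      noncomm_ring
    rw [step, hWH, hspec, sandwich, sandwich]
    have hfun : star g * ((fun x : ℝ => (x : ℂ)) ∘ d) * g = fun _ => 1 := by
      funext j
      simpa [Pi.mul_apply] using hg j
    rw [hfun]
    have hdiag : Matrix.diagonal (fun _ : Fin n => (1 : ℂ)) = 1 := Matrix.diagonal_one
    rw [hdiag, Matrix.mul_one, hV2]
  refine ⟨C * (V * Matrix.diagonal g₁ * Vᴴ), C * (V * Matrix.diagonal g₂ * Vᴴ), ?_, ?_, ?_⟩
  · exact key g₁ fun j => scalar_key (he2 j) (hs2 j) (he0 j)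
  · exact key g₂ fun j => scalar_key (he2 j) (by rw [neg_pow]; simpa using hs2 j) (he0 j)
  · have hsum : g₁ + g₂ = fun _ => (2 : ℂ) := by
      funext j
      exact scalar_sum (he0 j)
    have hWsum : V * Matrix.diagonal g₁ * Vᴴ + V * Matrix.diagonal g₂ * Vᴴ = (2 : ℂ) • 1 := by
      calc V * Matrix.diagonal g₁ * Vᴴ + V * Matrix.diagonal g₂ * Vᴴ
          = V * (Matrix.diagonal g₁ + Matrix.diagonal g₂) * Vᴴ := by
            rw [Matrix.mul_add, Matrix.add_mul]
        _ = V * Matrix.diagonal (g₁ + g₂) * Vᴴ := by rw [Matrix.diagonal_add]; rfl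
        _ = V * ((2 : ℂ) • 1) * Vᴴ := by rw [hsum, ← Matrix.smul_one_eq_diagonal]
        _ = (2 : ℂ) • 1 := by rw [Matrix.mul_smul, Matrix.mul_one, Matrix.smul_mul, hV2]
    rw [← Matrix.mul_add, hWsum, Matrix.mul_smul, Matrix.mul_one]

noncomputable def hadCLM (M : Matrix (Fin n) (Fin n) ℂ) :
    Matrix (Fin n) (Fin n) ℂ →L[ℂ] Matrix (Fin n) (Fin n) ℂ :=
  LinearMap.toContinuousLinearMap
    { toFun := fun C => M.hadamard C
      map_add' := fun A B => Matrix.hadamard_add M A B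
      map_smul' := fun c A => Matrix.hadamard_smul (A := M) (B := A) c }

lemma hadCLM_apply (M C : Matrix (Fin n) (Fin n) ℂ) : hadCLM M C = M.hadamard C := by
  unfold hadCLM
  rw [LinearMap.coe_toContinuousLinearMap']
  rfl

lemma unit_bound {M : Matrix (Fin n) (Fin n) ℂ} {b : ℝ}
    (hb : ∀ U : Matrix (Fin n) (Fin n) ℂ, Uᴴ * U = 1 → ‖M.hadamard U‖ ≤ b)
    {C : Matrix (Fin n) (Fin n) ℂ} (hC : ‖C‖ ≤ 1) (hCu : IsUnit C) : ‖M.hadamard C‖ ≤ b := by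
  obtain ⟨U₁, U₂, h1, h2, hsum⟩ := exists_unitary_midpoint hC hCu
  have hC' : M.hadamard C = (2 : ℂ)⁻¹ • (M.hadamard U₁ + M.hadamard U₂) := by
    have hC2 : C = (2 : ℂ)⁻¹ • (U₁ + U₂) := by
      rw [hsum, smul_smul]
      norm_num
    rw [hC2, Matrix.hadamard_smul, Matrix.hadamard_add]
  rw [hC', norm_smul]
  have hb1 := hb U₁ h1
  have hb2 := hb U₂ h2
  have hnrm : ‖((2 : ℂ)⁻¹)‖ = 2⁻¹ := by norm_num
  rw [hnrm]
  have htri := norm_add_le (M.hadamard U₁) (M.hadamard U₂)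
  linarith

lemma ball_bound (hn : 0 < n) {M : Matrix (Fin n) (Fin n) ℂ} {b : ℝ}
    (hb : ∀ U : Matrix (Fin n) (Fin n) ℂ, Uᴴ * U = 1 → ‖M.hadamard U‖ ≤ b) :
    ∀ C : Matrix (Fin n) (Fin n) ℂ, ‖C‖ ≤ 1 → ‖M.hadamard C‖ ≤ b := by
  intro C hC
  refine le_of_forall_pos_le_add fun ε hε => ?_
  have hL0 : 0 ≤ ‖hadCLM (n := n) M‖ := ContinuousLinearMap.opNorm_nonneg _
  set L := ‖hadCLM (n := n) M‖ with hLdef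
  set δ : ℝ := min (ε / (2 * (L + 1))) (1 / 2) with hδdef
  have hδ0 : 0 < δ := lt_min (div_pos hε (by nlinarith)) (by norm_num)
  have hδhalf : δ ≤ 1 / 2 := min_le_right _ _
  have hδε : 2 * L * δ ≤ ε := by
    have h1 : δ ≤ ε / (2 * (L + 1)) := min_le_left _ _
    have h2 : 2 * (L + 1) * δ ≤ ε := by
      rw [← (by field_simp : 2 * (L + 1) * (ε / (2 * (L + 1))) = ε)]
      have : (0:ℝ) < 2 * (L + 1) := by positivity
      nlinarith
    nlinarith
  set t : ℝ := 1 - δ with htdef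
  have ht0 : 0 ≤ t := by rw [htdef]; linarith
  have hfin : {x : ℝ | (-(x : ℂ)) ∈ spectrum ℂ ((t : ℂ) • C)}.Finite := by
    apply Set.Finite.preimage _ (Matrix.finite_spectrum _)
    intro a _ c _ hac
    have : (a : ℂ) = (c : ℂ) := by
      have := neg_injective hac
      exact this
    exact_mod_cast this
  obtain ⟨s, hsIoo, hsnot⟩ := ((Set.Ioo_infinite hδ0).diff hfin).nonempty
  have hs0 : 0 < s := hsIoo.1
  have hsδ : s < δ := hsIoo.2
  set C' : Matrix (Fin n) (Fin n) ℂ := (t : ℂ) • C + (s : ℂ) • 1 with hC'def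
  have hCu : IsUnit C' := by
    have hnot := spectrum.notMem_iff.mp hsnot
    rw [Algebra.algebraMap_eq_smul_one] at hnot
    have h2 : (-(s : ℂ)) • (1 : Matrix (Fin n) (Fin n) ℂ) - (t : ℂ) • C = -C' := by
      rw [hC'def]
      module
    rw [h2] at hnot
    simpa using hnot.neg
  have hnorm1 : ‖(1 : Matrix (Fin n) (Fin n) ℂ)‖ = 1 := norm_one_matrix hn
  have hnt : ‖((t : ℝ) : ℂ)‖ = t := by
    rw [Complex.norm_real, Real.norm_eq_abs, abs_of_nonneg ht0]
  have hns : ‖((s : ℝ) : ℂ)‖ = s := by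
    rw [Complex.norm_real, Real.norm_eq_abs, abs_of_nonneg hs0.le]
  have hC'norm : ‖C'‖ ≤ 1 := by
    calc ‖C'‖ ≤ ‖(t : ℂ) • C‖ + ‖(s : ℂ) • (1 : Matrix (Fin n) (Fin n) ℂ)‖ := norm_add_le _ _
      _ = t * ‖C‖ + s * 1 := by rw [norm_smul, norm_smul, hnt, hns, hnorm1]
      _ ≤ t * 1 + s := by nlinarith
      _ ≤ 1 := by rw [htdef]; linarith
  have hdiff : ‖C - C'‖ ≤ 2 * δ := by
    have heq : C - C' = ((δ : ℝ) : ℂ) • C - (s : ℂ) • 1 := by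
      rw [hC'def, htdef]
      push_cast
      module
    rw [heq]
    calc ‖((δ : ℝ) : ℂ) • C - (s : ℂ) • (1 : Matrix (Fin n) (Fin n) ℂ)‖
        ≤ ‖((δ : ℝ) : ℂ) • C‖ + ‖(s : ℂ) • (1 : Matrix (Fin n) (Fin n) ℂ)‖ := norm_sub_le _ _
      _ = δ * ‖C‖ + s * 1 := by
          rw [norm_smul, norm_smul, hnorm1, Complex.norm_real, Real.norm_eq_abs,
            abs_of_nonneg hδ0.le, hns]
      _ ≤ δ * 1 + δ := by nlinarith
      _ = 2 * δ := by ring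
  have hkey : ‖M.hadamard C'‖ ≤ b := unit_bound hb hC'norm hCu
  have hsubeq : hadCLM (n := n) M (C - C') = M.hadamard C - M.hadamard C' := by
    rw [map_sub, hadCLM_apply, hadCLM_apply]
  have hlip : ‖M.hadamard C‖ - ‖M.hadamard C'‖ ≤ L * ‖C - C'‖ := by
    calc ‖M.hadamard C‖ - ‖M.hadamard C'‖ ≤ ‖M.hadamard C - M.hadamard C'‖ :=
          norm_sub_norm_le _ _
      _ = ‖hadCLM (n := n) M (C - C')‖ := by rw [hsubeq]
      _ ≤ L * ‖C - C'‖ := (hadCLM M).le_opNorm _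
  have : L * ‖C - C'‖ ≤ L * (2 * δ) := by nlinarith [norm_nonneg (C - C')]
  linarith

lemma exists_max (hn : 0 < n) (M : Matrix (Fin n) (Fin n) ℂ) :
    ∃ U₀ : Matrix (Fin n) (Fin n) ℂ, U₀ᴴ * U₀ = 1 ∧
      ∀ U : Matrix (Fin n) (Fin n) ℂ, Uᴴ * U = 1 → ‖M.hadamard U‖ ≤ ‖M.hadamard U₀‖ := by
  haveI : ProperSpace (Matrix (Fin n) (Fin n) ℂ) := FiniteDimensional.proper_rclike ℂ _
  set K : Set (Matrix (Fin n) (Fin n) ℂ) := {U | Uᴴ * U = 1} with hKdef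
  have hstarcont : Continuous fun U : Matrix (Fin n) (Fin n) ℂ => Uᴴ := by
    apply Isometry.continuous
    apply Isometry.of_dist_eq
    intro A B
    rw [dist_eq_norm, dist_eq_norm, ← Matrix.conjTranspose_sub, Matrix.l2_opNorm_conjTranspose]
  have hcont : Continuous fun U : Matrix (Fin n) (Fin n) ℂ => Uᴴ * U :=
    hstarcont.mul continuous_id
  have hclosed : IsClosed K := by
    have hKeq : K = (fun U : Matrix (Fin n) (Fin n) ℂ => Uᴴ * U) ⁻¹' {1} := by
      ext U
      simp [hKdef]
    rw [hKeq]
    exact isClosed_singleton.preimage hcont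
  have hsub : K ⊆ Metric.closedBall 0 1 := fun U hU => by
    rw [Metric.mem_closedBall, dist_zero_right, norm_unitary hn hU]
  have hKcompact : IsCompact K :=
    (isCompact_closedBall (0 : Matrix (Fin n) (Fin n) ℂ) 1).of_isClosed_subset hclosed hsub
  have hne : K.Nonempty := ⟨1, by simp [hKdef]⟩
  have hfcont : Continuous fun U : Matrix (Fin n) (Fin n) ℂ => ‖M.hadamard U‖ := by
    have heq : (fun U : Matrix (Fin n) (Fin n) ℂ => ‖M.hadamard U‖)
        = fun U => ‖hadCLM (n := n) M U‖ := by
      funext U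
      rw [hadCLM_apply]
    rw [heq]
    exact (hadCLM M).continuous.norm
  obtain ⟨U₀, hU₀K, hmax⟩ := hKcompact.exists_isMaxOn hne hfcont.continuousOn
  exact ⟨U₀, hU₀K, fun U hU => isMaxOn_iff.mp hmax U hU⟩

lemma main_aux (hn : 0 < n) (M : Matrix (Fin n) (Fin n) ℂ) :
    ∃ U : Matrix (Fin n) (Fin n) ℂ, U.conjTranspose * U = 1 ∧
      Matrix.copNorm (Matrix.hadamard M U) = Matrix.schurNorm M := by
  obtain ⟨U₀, hU₀, hmax⟩ := exists_max hn M
  have hball : ∀ C : Matrix (Fin n) (Fin n) ℂ, ‖C‖ ≤ 1 → ‖M.hadamard C‖ ≤ ‖M.hadamard U₀‖ :=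
    ball_bound hn hmax
  refine ⟨U₀, hU₀, ?_⟩
  have hmem : Matrix.copNorm (Matrix.hadamard M U₀) ∈
      {x | ∃ C : Matrix (Fin n) (Fin n) ℂ, Matrix.copNorm C ≤ 1 ∧
        x = Matrix.copNorm (Matrix.hadamard M C)} :=
    ⟨U₀, by rw [copNorm_eq_l2]; exact (norm_unitary hn hU₀).le, rfl⟩
  have hub : ∀ x ∈ {x | ∃ C : Matrix (Fin n) (Fin n) ℂ, Matrix.copNorm C ≤ 1 ∧
      x = Matrix.copNorm (Matrix.hadamard M C)}, x ≤ Matrix.copNorm (Matrix.hadamard M U₀) := by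
    rintro x ⟨C, hC, rfl⟩
    rw [copNorm_eq_l2] at hC
    rw [copNorm_eq_l2, copNorm_eq_l2]
    exact hball C hC
  unfold Matrix.schurNorm
  exact le_antisymm (le_csSup ⟨_, hub⟩ hmem) (csSup_le ⟨_, hmem⟩ hub)

end Aux

/-- For any complex square matrix `M`, the Schur norm is attained at a unitary matrix. -/
theorem unitary_witness_for_schur_norm (n : ℕ) (hn : 0 < n)
    (M : Matrix (Fin n) (Fin n) ℂ) :
    ∃ U : Matrix (Fin n) (Fin n) ℂ, U.conjTranspose * U = 1 ∧
      Matrix.copNorm (Matrix.hadamard M U) = Matrix.schurNorm M :=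
  main_aux hn M
end

section
/- Let M be an n×m complex matrix with columns c₁, c₂, …, c_m each satisfying ‖c_j‖ ≤ 1 (Euclidean norm). Then the operator norm satisfies ‖M‖ ≤ √m, and equality holds if and only if ‖c₁‖ = 1 and there exist complex scalars z₁, z₂, …, z_m with |z_j| = 1 and c_j = z_j c₁ for all j. -/
open scoped ComplexOrder

open Finset in
lemma aux_sum_norm_le {m : ℕ} (x : EuclideanSpace ℂ (Fin m)) :
    ∑ j, ‖x j‖ ≤ Real.sqrt m * ‖x‖ := by
  have h1 : (∑ j, ‖x j‖) ^ 2 ≤ (m : ℝ) * ∑ j, ‖x j‖ ^ 2 := by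
    simpa using sq_sum_le_card_mul_sum_sq (s := (univ : Finset (Fin m))) (f := fun j => ‖x j‖)
  have h2 : ‖x‖ = Real.sqrt (∑ j, ‖x j‖ ^ 2) := EuclideanSpace.norm_eq x
  calc ∑ j, ‖x j‖ = Real.sqrt ((∑ j, ‖x j‖)^2) :=
        (Real.sqrt_sq (Finset.sum_nonneg fun j _ => norm_nonneg _)).symm
    _ ≤ Real.sqrt ((m : ℝ) * ∑ j, ‖x j‖ ^ 2) := Real.sqrt_le_sqrt h1
    _ = Real.sqrt m * ‖x‖ := by rw [Real.sqrt_mul (Nat.cast_nonneg m), h2]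

set_option maxHeartbeats 2000000 in
/-- If each column of the `n × m` complex matrix `M` has Euclidean norm at most `1`, then
`‖M‖ ≤ √m`, with equality iff the first column has norm `1` and every column is a unimodular
scalar multiple of the first column. -/
theorem opNorm_le_sqrt_of_columns (n m : ℕ) (hm : 0 < m) (M : Matrix (Fin n) (Fin m) ℂ)
    (h : ∀ j, Real.sqrt (∑ i, ‖M i j‖ ^ 2) ≤ 1) :
    Matrix.copNorm M ≤ Real.sqrt m ∧
      (Matrix.copNorm M = Real.sqrt m ↔
        (Real.sqrt (∑ i, ‖M i ⟨0, hm⟩‖ ^ 2) = 1 ∧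
          ∃ z : Fin m → ℂ, ∀ j, ‖z j‖ = 1 ∧ ∀ i, M i j = z j * M i ⟨0, hm⟩)) := by
  classical
  set j0 : Fin m := ⟨0, hm⟩ with hj0
  set f := LinearMap.toContinuousLinearMap (Matrix.toEuclideanLin M) with hfdef
  set c : Fin m → EuclideanSpace ℂ (Fin n) := fun j => WithLp.toLp 2 (fun i => M i j) with hcdef
  have hcol : ∀ j, ‖c j‖ = Real.sqrt (∑ i, ‖M i j‖ ^ 2) := by
    intro j
    rw [EuclideanSpace.norm_eq]
  have hc1 : ∀ j, ‖c j‖ ≤ 1 := fun j => by rw [hcol]; exact h j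
  have hf : ∀ x : EuclideanSpace ℂ (Fin m), f x = ∑ j, x j • c j := by
    intro x
    ext i
    simp only [hfdef, Matrix.toEuclideanLin_apply, LinearMap.coe_toContinuousLinearMap']
    rw [show ((∑ j, x j • c j) i) = ∑ j, (x j • c j) i from by rw [WithLp.ofLp_sum, Finset.sum_apply]]
    simp [Matrix.mulVec, dotProduct, mul_comm, hcdef]
  have hcop : Matrix.copNorm M = ‖f‖ := rfl
  have hsm : (0:ℝ) < Real.sqrt m := Real.sqrt_pos.2 (by exact_mod_cast hm)
  have hmss : Real.sqrt m * Real.sqrt m = (m:ℝ) := Real.mul_self_sqrt (Nat.cast_nonneg m)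
  -- upper bound
  have hub : ‖f‖ ≤ Real.sqrt m := by
    apply ContinuousLinearMap.opNorm_le_bound _ (Real.sqrt_nonneg _)
    intro x
    calc ‖f x‖ = ‖∑ j, x j • c j‖ := by rw [hf]
      _ ≤ ∑ j, ‖x j • c j‖ := norm_sum_le _ _
      _ ≤ ∑ j, ‖x j‖ := Finset.sum_le_sum fun j _ => by
          rw [norm_smul]; exact mul_le_of_le_one_right (norm_nonneg _) (hc1 j)
      _ ≤ Real.sqrt m * ‖x‖ := aux_sum_norm_le x
  refine ⟨hcop ▸ hub, ?_, ?_⟩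
  · -- forward direction
    intro heq
    have hfn : ‖f‖ = Real.sqrt m := hcop.symm.trans heq
    -- attainment of the operator norm on the sphere
    obtain ⟨x, hx1, hfxn⟩ : ∃ x : EuclideanSpace ℂ (Fin m), ‖x‖ = 1 ∧ ‖f x‖ = ‖f‖ := by
      have hne : (Metric.sphere (0 : EuclideanSpace ℂ (Fin m)) 1).Nonempty := by
        refine ⟨EuclideanSpace.single j0 (1:ℂ), ?_⟩
        rw [mem_sphere_zero_iff_norm, EuclideanSpace.norm_single]
        simp
      obtain ⟨x0, hx0S, hmax⟩ := (isCompact_sphere (0 : EuclideanSpace ℂ (Fin m)) 1).exists_isMaxOn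
        hne ((continuous_norm.comp f.continuous).continuousOn)
      have hx0 : ‖x0‖ = 1 := mem_sphere_zero_iff_norm.1 hx0S
      refine ⟨x0, hx0, le_antisymm ((f.le_opNorm x0).trans (by rw [hx0, mul_one])) ?_⟩
      apply ContinuousLinearMap.opNorm_le_bound _ (norm_nonneg _)
      intro y
      rcases eq_or_ne y 0 with rfl | hy
      · simp
      · have hyn : (0:ℝ) < ‖y‖ := norm_pos_iff.2 hy
        have hu : ((‖y‖⁻¹ : ℂ) • y) ∈ Metric.sphere (0 : EuclideanSpace ℂ (Fin m)) 1 := by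
          rw [mem_sphere_zero_iff_norm, norm_smul]
          simp [abs_of_pos (inv_pos.2 hyn), inv_mul_cancel₀ hyn.ne']
        have hle : ‖f ((‖y‖⁻¹ : ℂ) • y)‖ ≤ ‖f x0‖ := hmax hu
        have hsc : ‖f ((‖y‖⁻¹ : ℂ) • y)‖ = ‖y‖⁻¹ * ‖f y‖ := by
          rw [map_smul, norm_smul]
          simp [abs_of_pos (inv_pos.2 hyn)]
        rw [hsc] at hle
        calc ‖f y‖ = ‖y‖ * (‖y‖⁻¹ * ‖f y‖) := by field_simp
          _ ≤ ‖y‖ * ‖f x0‖ := mul_le_mul_of_nonneg_left hle hyn.le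
          _ = ‖f x0‖ * ‖y‖ := mul_comm _ _
    rw [hfn] at hfxn
    have hsq1 : ∑ j, ‖x j‖ ^ 2 = 1 := by
      have he := EuclideanSpace.norm_eq x
      rw [hx1] at he
      have h0 : (0:ℝ) ≤ ∑ j, ‖x j‖ ^ 2 := Finset.sum_nonneg fun j _ => sq_nonneg _
      nlinarith [Real.sq_sqrt h0]
    set ip : Fin m → ℂ := fun j => (inner ℂ (c j) (f x) : ℂ) with hip
    have e1 : (inner ℂ (f x) (f x) : ℂ) = ∑ j, (starRingEnd ℂ) (x j) * ip j := by
      nth_rewrite 1 [hf x]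
      rw [sum_inner]
      exact Finset.sum_congr rfl fun j _ => inner_smul_left _ _ _
    have e2 : (inner ℂ (f x) (f x) : ℂ) = (m:ℂ) := by
      rw [inner_self_eq_norm_sq_to_K, hfxn]
      norm_cast
      rw [Real.sq_sqrt (Nat.cast_nonneg m)]
      exact Complex.ofReal_natCast m
    have hS1 : (m:ℝ) = ∑ j, ((starRingEnd ℂ) (x j) * ip j).re := by
      have h3 := congrArg Complex.re (e1.symm.trans e2)
      rw [Complex.re_sum, Complex.natCast_re] at h3
      exact h3.symm
    have hterm12 : ∀ j, ((starRingEnd ℂ) (x j) * ip j).re ≤ ‖x j‖ * ‖ip j‖ := by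
      intro j
      calc ((starRingEnd ℂ) (x j) * ip j).re ≤ ‖(starRingEnd ℂ) (x j) * ip j‖ :=
            Complex.re_le_norm _
        _ = ‖x j‖ * ‖ip j‖ := by
            rw [norm_mul, Complex.norm_conj]
    have hipb : ∀ j, ‖ip j‖ ≤ Real.sqrt m := by
      intro j
      calc ‖ip j‖ ≤ ‖c j‖ * ‖f x‖ := norm_inner_le_norm _ _
        _ ≤ 1 * Real.sqrt m := by
            rw [hfxn]; exact mul_le_mul_of_nonneg_right (hc1 j) hsm.le
        _ = Real.sqrt m := one_mul _
    have hA : (m:ℝ) ≤ ∑ j, ‖x j‖ * ‖ip j‖ :=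
      hS1 ▸ Finset.sum_le_sum fun j _ => hterm12 j
    have hB : ∑ j, ‖x j‖ * ‖ip j‖ ≤ ∑ j, ‖x j‖ * Real.sqrt m :=
      Finset.sum_le_sum fun j _ => mul_le_mul_of_nonneg_left (hipb j) (norm_nonneg _)
    have hC : ∑ j, ‖x j‖ * Real.sqrt m ≤ (m:ℝ) := by
      rw [← Finset.sum_mul]
      have h4 := aux_sum_norm_le x
      rw [hx1, mul_one] at h4
      nlinarith
    have hchain : ∑ j, ‖x j‖ * ‖ip j‖ = ∑ j, ‖x j‖ * Real.sqrt m :=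
      le_antisymm hB (hC.trans hA)
    have hsumabs : ∑ j, ‖x j‖ = Real.sqrt m := by
      have h5 : (∑ j, ‖x j‖) * Real.sqrt m = (m:ℝ) :=
        le_antisymm (by rw [Finset.sum_mul]; exact hC) (by rw [Finset.sum_mul]; exact hA.trans hB)
      apply mul_right_cancel₀ hsm.ne'
      rw [h5, hmss]
    have hxne : ∀ j, x j ≠ 0 := by
      intro j hj
      have h0 : ‖x j‖ = 0 := by rw [hj]; simp
      have hs : ∑ k ∈ Finset.univ.erase j, ‖x k‖ = ∑ k, ‖x k‖ := by
        rw [← Finset.sum_erase_add Finset.univ _ (Finset.mem_univ j), h0, add_zero]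
      have h4 := sq_sum_le_card_mul_sum_sq (s := Finset.univ.erase j) (f := fun k => ‖x k‖)
      have hcard : (((Finset.univ.erase j).card : ℕ) : ℝ) = (m:ℝ) - 1 := by
        rw [Finset.card_erase_of_mem (Finset.mem_univ j), Finset.card_univ, Fintype.card_fin]
        rw [Nat.cast_sub hm]; simp
      have h5 : ∑ k ∈ Finset.univ.erase j, ‖x k‖ ^ 2 ≤ 1 := by
        rw [← hsq1]
        exact Finset.sum_le_sum_of_subset_of_nonneg (Finset.subset_univ _)
          (fun _ _ _ => sq_nonneg _)
      rw [hcard, hs, hsumabs] at h4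
      nlinarith
    have hipeq : ∀ j, ‖ip j‖ = Real.sqrt m := by
      intro j
      have h6 := (Finset.sum_eq_sum_iff_of_le
        (fun k (_ : k ∈ Finset.univ) => mul_le_mul_of_nonneg_left (hipb k) (norm_nonneg (x k)))).1
        hchain j (Finset.mem_univ j)
      exact mul_left_cancel₀ (norm_ne_zero_iff.2 (hxne j)) h6
    have hfx0 : f x ≠ 0 := by
      intro h0
      rw [h0, norm_zero] at hfxn
      exact hsm.ne' hfxn.symm
    have hcn : ∀ j, ‖c j‖ = 1 := by
      intro j
      refine le_antisymm (hc1 j) ?_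
      have h6 : ‖ip j‖ ≤ ‖c j‖ * ‖f x‖ := norm_inner_le_norm _ _
      rw [hfxn, hipeq j] at h6
      nlinarith
    have hr : ∀ j, ∃ r : ℂ, r ≠ 0 ∧ f x = r • c j := by
      intro j
      have hcne : c j ≠ 0 := by
        intro h0
        have := hcn j
        rw [h0, norm_zero] at this
        norm_num at this
      refine (norm_inner_eq_norm_iff hcne hfx0).1 ?_
      rw [hcn j, one_mul, hfxn]
      exact hipeq j
    choose r hr0 hrc using hr
    refine ⟨by rw [← hcol j0]; exact hcn j0, fun j => (r j)⁻¹ * r j0, fun j => ?_⟩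
    have hcz : c j = ((r j)⁻¹ * r j0) • c j0 := by
      have h7 : (r j) • c j = (r j0) • c j0 := (hrc j).symm.trans (hrc j0)
      calc c j = (r j)⁻¹ • ((r j) • c j) := by
            rw [smul_smul, inv_mul_cancel₀ (hr0 j), one_smul]
        _ = (r j)⁻¹ • ((r j0) • c j0) := by rw [h7]
        _ = ((r j)⁻¹ * r j0) • c j0 := by rw [smul_smul]
    have habs : ‖(r j)⁻¹ * r j0‖ = 1 := by
      have h8 := congrArg norm hcz
      rw [norm_smul, hcn j, hcn j0, mul_one] at h8
      exact h8.symm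
    exact ⟨habs, fun i => congrFun (congrArg WithLp.ofLp hcz) i⟩
  · -- reverse direction
    rintro ⟨hc0, z, hz⟩
    have hc0' : ‖c j0‖ = 1 := by rw [hcol]; exact hc0
    have hcz : ∀ j, c j = z j • c j0 := by
      intro j; ext i; exact (hz j).2 i
    set x : EuclideanSpace ℂ (Fin m) := WithLp.toLp 2 (fun j => (starRingEnd ℂ) (z j)) with hxdef
    have hxn : ‖x‖ = Real.sqrt m := by
      rw [EuclideanSpace.norm_eq]
      congr 1
      rw [show ∑ j, ‖x j‖ ^ 2 = ∑ _j : Fin m, (1:ℝ) from Finset.sum_congr rfl fun j _ => by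
        simp [hxdef, (hz j).1]]
      simp
    have hfx : f x = (m : ℂ) • c j0 := by
      rw [hf]
      have h9 : ∀ j : Fin m, x j • c j = c j0 := by
        intro j
        rw [hcz j, smul_smul]
        have : (starRingEnd ℂ) (z j) * z j = 1 := by
          rw [mul_comm, Complex.mul_conj, Complex.normSq_eq_norm_sq, (hz j).1]
          norm_num
        rw [show x j = (starRingEnd ℂ) (z j) from rfl, this, one_smul]
      rw [Finset.sum_congr rfl fun j _ => h9 j]
      simp only [Finset.sum_const, Finset.card_univ, Fintype.card_fin]
      exact (Nat.cast_smul_eq_nsmul ℂ m (c j0)).symm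
    have hfxn : ‖f x‖ = (m:ℝ) := by
      rw [hfx, norm_smul, hc0']
      simp
    have hge : Real.sqrt m ≤ ‖f‖ := by
      have h1 : ‖f x‖ ≤ ‖f‖ * ‖x‖ := f.le_opNorm x
      rw [hfxn, hxn] at h1
      nlinarith [ContinuousLinearMap.opNorm_nonneg f]
    rw [hcop]
    exact le_antisymm hub hge
end

section
/- For every positive integer n, the maximum of ‖M‖_S over all n×n complex matrices M whose entries all have modulus at most 1 equals √n. That is, every such M satisfies ‖M‖_S ≤ √n, and there exists such a matrix (e.g., the Fourier matrix with (i,j)-entry e^{2πi·ij/n}) whose Schur norm equals √n. -/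
open scoped ComplexOrder

section Aux

open scoped Matrix.Norms.L2Operator
open Matrix

lemma copNorm_eq {m n : Type*} [Fintype m] [Fintype n] [DecidableEq n] (M : Matrix m n ℂ) :
    M.copNorm = ‖M‖ := rfl

set_option maxHeartbeats 2000000 in
lemma opNorm_le_frobenius {m n : Type*} [Fintype m] [Fintype n] [DecidableEq n]
    (A : Matrix m n ℂ) : ‖A‖ ≤ Real.sqrt (∑ i, ∑ j, ‖A i j‖ ^ 2) := by
  rw [Matrix.l2_opNorm_def]
  refine ContinuousLinearMap.opNorm_le_bound _ (Real.sqrt_nonneg _) fun x => ?_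
  have hx : ‖x‖ = Real.sqrt (∑ j, ‖x j‖ ^ 2) := EuclideanSpace.norm_eq x
  have hAx : ‖((Matrix.toEuclideanLin ≪≫ₗ LinearMap.toContinuousLinearMap) A) x‖
      = Real.sqrt (∑ i, ‖∑ j, A i j * x j‖ ^ 2) := by
    have h0 : ((Matrix.toEuclideanLin ≪≫ₗ LinearMap.toContinuousLinearMap) A) x
      = Matrix.toEuclideanLin A x := rfl
    rw [h0, Matrix.toEuclideanLin_apply, EuclideanSpace.norm_eq]
    simp only [PiLp.toLp_apply, Matrix.mulVec, dotProduct]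
  rw [hAx, hx, ← Real.sqrt_mul (by positivity)]
  apply Real.sqrt_le_sqrt
  rw [Finset.sum_mul]
  apply Finset.sum_le_sum
  intro i _
  calc ‖∑ j, A i j * x j‖ ^ 2 ≤ (∑ j, ‖A i j‖ * ‖x j‖) ^ 2 := by
        apply pow_le_pow_left₀ (norm_nonneg _)
        exact (norm_sum_le _ _).trans (le_of_eq (by simp [norm_mul]))
    _ ≤ (∑ j, ‖A i j‖ ^ 2) * ∑ j, ‖x j‖ ^ 2 :=
        Finset.sum_mul_sq_le_sq_mul_sq _ _ _

set_option maxHeartbeats 2000000 in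
lemma frobenius_sq_le {m n : Type*} [Fintype m] [Fintype n] [DecidableEq n]
    (C : Matrix m n ℂ) : ∑ i, ∑ j, ‖C i j‖ ^ 2 ≤ (Fintype.card n) * ‖C‖ ^ 2 := by
  rw [Finset.sum_comm]
  have key : ∀ j, ∑ i, ‖C i j‖ ^ 2 ≤ ‖C‖ ^ 2 := by
    intro j
    have h := Matrix.l2_opNorm_mulVec C (EuclideanSpace.single j (1:ℂ))
    rw [EuclideanSpace.norm_single, norm_one, mul_one] at h
    have hv : ‖(EuclideanSpace.equiv m ℂ).symm (C *ᵥ (EuclideanSpace.single j (1:ℂ)))‖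
        = Real.sqrt (∑ i, ‖C i j‖ ^ 2) := by
      rw [EuclideanSpace.norm_eq]
      congr 1
      apply Finset.sum_congr rfl
      intro i _
      congr 2
      show (C *ᵥ (Pi.single j (1:ℂ))) i = C i j
      rw [Matrix.mulVec_single]
      exact mul_one _
    rw [hv] at h
    calc ∑ i, ‖C i j‖ ^ 2 = Real.sqrt (∑ i, ‖C i j‖ ^ 2) ^ 2 := by
          rw [Real.sq_sqrt (by positivity)]
      _ ≤ ‖C‖ ^ 2 := pow_le_pow_left₀ (Real.sqrt_nonneg _) h 2
  calc ∑ j, ∑ i, ‖C i j‖ ^ 2 ≤ ∑ _j : n, ‖C‖ ^ 2 := Finset.sum_le_sum fun j _ => key j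
    _ = (Fintype.card n) * ‖C‖ ^ 2 := by rw [Finset.sum_const, nsmul_eq_mul, Fintype.card]

lemma schur_set_bound {n : ℕ} (M : Matrix (Fin n) (Fin n) ℂ)
    (hM : ∀ i j, ‖M i j‖ ≤ 1) :
    ∀ x ∈ {x | ∃ C : Matrix (Fin n) (Fin n) ℂ, Matrix.copNorm C ≤ 1 ∧
      x = Matrix.copNorm (Matrix.hadamard M C)}, x ≤ Real.sqrt n := by
  rintro x ⟨C, hC, rfl⟩
  rw [copNorm_eq] at hC ⊢
  calc ‖Matrix.hadamard M C‖ ≤ Real.sqrt (∑ i, ∑ j, ‖(Matrix.hadamard M C) i j‖ ^ 2) :=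
        opNorm_le_frobenius _
    _ ≤ Real.sqrt (∑ i, ∑ j, ‖C i j‖ ^ 2) := by
        apply Real.sqrt_le_sqrt
        refine Finset.sum_le_sum fun i _ => Finset.sum_le_sum fun j _ => ?_
        rw [Matrix.hadamard_apply, norm_mul]
        have h1 : ‖M i j‖ ≤ 1 := by exact hM i j
        have := mul_le_mul_of_nonneg_right h1 (norm_nonneg (C i j))
        rw [one_mul] at this
        exact pow_le_pow_left₀ (by positivity) this 2
    _ ≤ Real.sqrt (n * ‖C‖ ^ 2) := by
        apply Real.sqrt_le_sqrt
        simpa [Fintype.card_fin] using frobenius_sq_le C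
    _ ≤ Real.sqrt (n * 1) := by
        apply Real.sqrt_le_sqrt
        exact mul_le_mul_of_nonneg_left (pow_le_one₀ (norm_nonneg _) hC) (by positivity)
    _ = Real.sqrt n := by rw [mul_one]

lemma schurNorm_le {n : ℕ} (M : Matrix (Fin n) (Fin n) ℂ)
    (hM : ∀ i j, ‖M i j‖ ≤ 1) : M.schurNorm ≤ Real.sqrt n :=
  Real.sSup_le (schur_set_bound M hM) (Real.sqrt_nonneg _)

/-- The Fourier matrix. -/
noncomputable def Fmat (n : ℕ) : Matrix (Fin n) (Fin n) ℂ :=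
  Matrix.of fun j k => Complex.exp ((2 * Real.pi * (j : ℕ) * (k : ℕ) / n : ℝ) * Complex.I)

lemma Fmat_abs (n : ℕ) (j k : Fin n) : ‖Fmat n j k‖ = 1 := by
  rw [Fmat, Matrix.of_apply, Complex.norm_exp]
  norm_num [Complex.mul_re, Complex.ofReal_re, Complex.ofReal_im, Complex.I_re, Complex.I_im]

lemma Fmat_symm (n : ℕ) (j k : Fin n) : Fmat n j k = Fmat n k j := by
  simp only [Fmat, Matrix.of_apply]
  ring_nf

lemma Fmat_mul_conj (n : ℕ) (j k : Fin n) :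
    Fmat n j k * star (Fmat n j k) = 1 := by
  simp only [Fmat, Matrix.of_apply, Complex.star_def, ← Complex.exp_conj, _root_.map_mul,
    Complex.conj_ofReal, Complex.conj_I, mul_neg, ← Complex.exp_add, add_neg_cancel,
    Complex.exp_zero]

lemma Fmat_pow (n : ℕ) (j l k : Fin n) :
    Fmat n j k * star (Fmat n l k) =
      Complex.exp ((2 * Real.pi * ((j : ℕ) - (l : ℕ) : ℝ) / n : ℝ) * Complex.I) ^ (k : ℕ) := by
  rw [← Complex.exp_nat_mul]
  simp only [Fmat, Matrix.of_apply, Complex.star_def, ← Complex.exp_conj, _root_.map_mul,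
    Complex.conj_ofReal, Complex.conj_I, mul_neg, ← Complex.exp_add]
  congr 1
  push_cast
  ring

lemma Fmat_mul_conjTranspose (n : ℕ) (hn : 0 < n) :
    Fmat n * (Fmat n)ᴴ = (n : ℂ) • 1 := by
  have hn' : (n : ℝ) ≠ 0 := Nat.cast_ne_zero.mpr hn.ne'
  ext j l
  rw [Matrix.mul_apply]
  simp only [Matrix.conjTranspose_apply, Matrix.smul_apply, smul_eq_mul]
  by_cases hjl : j = l
  · subst hjl
    rw [Finset.sum_congr rfl fun k _ => Fmat_mul_conj n j k]
    simp [Matrix.one_apply_eq]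
  · set θ : ℂ := ((2 * Real.pi * ((j : ℕ) - (l : ℕ) : ℝ) / n : ℝ) : ℂ) * Complex.I with hθ
    have hz1 : Complex.exp θ ≠ 1 := by
      intro h
      rw [Complex.exp_eq_one_iff] at h
      obtain ⟨m, hm⟩ := h
      rw [hθ] at hm
      have h2 : (2 * Real.pi * ((j : ℕ) - (l : ℕ) : ℝ) / n : ℝ) = (m : ℝ) * (2 * Real.pi) := by
        simpa [Complex.mul_im, Complex.ofReal_re, Complex.ofReal_im, Complex.I_re, Complex.I_im]
          using congrArg Complex.im hm
      have hpi : (2 * Real.pi) ≠ 0 := by positivity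
      have h3 : ((j : ℕ) - (l : ℕ) : ℝ) = (m : ℝ) * n := by
        apply mul_left_cancel₀ hpi
        field_simp at h2
        linear_combination (2 * Real.pi) * h2
      have h4 : ((j : ℤ) - (l : ℤ)) = m * n := by exact_mod_cast h3
      have h5 : ((j : ℤ) - (l : ℤ)) = 0 := by
        refine Int.eq_zero_of_abs_lt_dvd ⟨m, h4.trans (mul_comm m n)⟩ ?_
        have hj := j.isLt; have hl := l.isLt
        rw [abs_lt]
        constructor <;> push_cast <;> omega
      apply hjl
      have : (j : ℤ) = (l : ℤ) := by omega
      exact Fin.ext (by exact_mod_cast this)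
    rw [Finset.sum_congr rfl fun k _ => Fmat_pow n j l k]
    rw [Fin.sum_univ_eq_sum_range (fun k => Complex.exp θ ^ k) n, geom_sum_eq hz1]
    have hzn : Complex.exp θ ^ n = 1 := by
      rw [← Complex.exp_nat_mul]
      have hnC : (n : ℂ) ≠ 0 := Nat.cast_ne_zero.mpr hn.ne'
      have : (n : ℂ) * θ = ((j : ℤ) - (l : ℤ) : ℂ) * (2 * Real.pi * Complex.I) := by
        rw [hθ]
        push_cast
        field_simp [hnC]
      rw [this]
      exact_mod_cast Complex.exp_int_mul_two_pi_mul_I ((j : ℤ) - (l : ℤ))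
    rw [hzn, sub_self, zero_div]
    rw [Matrix.one_apply_ne hjl]
    ring

set_option maxHeartbeats 2000000 in
lemma one_opNorm_le (n : ℕ) : ‖(1 : Matrix (Fin n) (Fin n) ℂ)‖ ≤ 1 := by
  rw [Matrix.l2_opNorm_def]
  refine ContinuousLinearMap.opNorm_le_bound _ zero_le_one fun x => ?_
  have h0 : ((Matrix.toEuclideanLin ≪≫ₗ LinearMap.toContinuousLinearMap)
      (1 : Matrix (Fin n) (Fin n) ℂ)) x = Matrix.toEuclideanLin (1 : Matrix (Fin n) (Fin n) ℂ) x :=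
    rfl
  rw [h0, Matrix.toEuclideanLin_apply, Matrix.one_mulVec, one_mul]

lemma FmatH_norm_le (n : ℕ) (hn : 0 < n) : ‖(Fmat n)ᴴ‖ ≤ Real.sqrt n := by
  have h := Matrix.l2_opNorm_conjTranspose_mul_self (Fmat n)ᴴ
  rw [Matrix.conjTranspose_conjTranspose, Fmat_mul_conjTranspose n hn] at h
  have hsm : ‖((n : ℂ) • (1 : Matrix (Fin n) (Fin n) ℂ))‖ ≤ n := by
    rw [norm_smul]
    calc ‖(n : ℂ)‖ * ‖(1 : Matrix (Fin n) (Fin n) ℂ)‖ ≤ ‖(n : ℂ)‖ * 1 :=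
          mul_le_mul_of_nonneg_left (one_opNorm_le n) (norm_nonneg _)
      _ = n := by simp
  rw [← Real.sqrt_sq (norm_nonneg ((Fmat n)ᴴ))]
  apply Real.sqrt_le_sqrt
  rw [sq]
  rw [h] at hsm
  exact hsm

/-- The contraction witnessing the lower bound. -/
noncomputable def C0 (n : ℕ) : Matrix (Fin n) (Fin n) ℂ :=
  (((Real.sqrt n)⁻¹ : ℝ) : ℂ) • (Fmat n)ᴴ

lemma C0_norm_le (n : ℕ) (hn : 0 < n) : ‖C0 n‖ ≤ 1 := by
  have hs : (0:ℝ) < Real.sqrt n := Real.sqrt_pos.mpr (by exact_mod_cast hn)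
  rw [C0, norm_smul]
  calc ‖(((Real.sqrt n)⁻¹ : ℝ) : ℂ)‖ * ‖(Fmat n)ᴴ‖ ≤ (Real.sqrt n)⁻¹ * Real.sqrt n := by
        apply mul_le_mul _ (FmatH_norm_le n hn) (norm_nonneg _) (by positivity)
        rw [Complex.norm_real, Real.norm_eq_abs, abs_of_nonneg (by positivity)]
    _ = 1 := inv_mul_cancel₀ hs.ne'

lemma hadamard_C0_apply (n : ℕ) (i j : Fin n) :
    (Matrix.hadamard (Fmat n) (C0 n)) i j = (((Real.sqrt n)⁻¹ : ℝ) : ℂ) := by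
  rw [Matrix.hadamard_apply, C0, Matrix.smul_apply, Matrix.conjTranspose_apply,
    ← Fmat_symm n j i, smul_eq_mul]
  rw [mul_comm (((Real.sqrt n)⁻¹ : ℝ) : ℂ) _, ← mul_assoc, Fmat_mul_conj n j i, one_mul]

set_option maxHeartbeats 2000000 in
lemma sqrt_le_hadamard_C0 (n : ℕ) (hn : 0 < n) :
    Real.sqrt n ≤ ‖Matrix.hadamard (Fmat n) (C0 n)‖ := by
  have hs : (0:ℝ) < Real.sqrt n := Real.sqrt_pos.mpr (by exact_mod_cast hn)
  have hnC : (n : ℂ) ≠ 0 := Nat.cast_ne_zero.mpr hn.ne'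
  set c : ℂ := (((Real.sqrt n)⁻¹ : ℝ) : ℂ) with hc
  set x : EuclideanSpace ℂ (Fin n) := (WithLp.equiv 2 (Fin n → ℂ)).symm (fun _ => c) with hx
  have hxnorm : ‖x‖ = 1 := by
    rw [EuclideanSpace.norm_eq]
    have : ∀ i : Fin n, ‖x i‖ ^ 2 = (n : ℝ)⁻¹ := by
      intro i
      rw [hx]
      show ‖c‖ ^ 2 = (n:ℝ)⁻¹
      rw [hc, Complex.norm_real, Real.norm_eq_abs, abs_of_nonneg (by positivity), ← Real.sqrt_inv,
        Real.sq_sqrt (by positivity)]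
    rw [Finset.sum_congr rfl fun i _ => this i, Finset.sum_const, Finset.card_univ,
      Fintype.card_fin, nsmul_eq_mul, mul_inv_cancel₀ (by exact_mod_cast hn.ne'), Real.sqrt_one]
  have hmv : (Matrix.hadamard (Fmat n) (C0 n)) *ᵥ (fun _ => c) = fun _ => 1 := by
    funext i
    rw [Matrix.mulVec, dotProduct]
    have : ∀ j : Fin n, (Matrix.hadamard (Fmat n) (C0 n)) i j * c = (n : ℂ)⁻¹ := by
      intro j
      rw [hadamard_C0_apply, hc, ← Complex.ofReal_mul,
        show ((Real.sqrt n)⁻¹ * (Real.sqrt n)⁻¹ : ℝ) = (n:ℝ)⁻¹ by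
          rw [← mul_inv, Real.mul_self_sqrt (by positivity)],
        Complex.ofReal_inv, Complex.ofReal_natCast]
    rw [Finset.sum_congr rfl fun j _ => this j, Finset.sum_const, Finset.card_univ,
      Fintype.card_fin, nsmul_eq_mul, mul_inv_cancel₀ hnC]
  have h := Matrix.l2_opNorm_mulVec (Matrix.hadamard (Fmat n) (C0 n)) x
  rw [hxnorm, mul_one] at h
  have hval : ‖(EuclideanSpace.equiv (Fin n) ℂ).symm
      ((Matrix.hadamard (Fmat n) (C0 n)) *ᵥ (WithLp.equiv 2 (Fin n → ℂ)) x)‖ = Real.sqrt n := by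
    rw [hx]
    show ‖(EuclideanSpace.equiv (Fin n) ℂ).symm ((Matrix.hadamard (Fmat n) (C0 n)) *ᵥ (fun _ => c))‖
      = Real.sqrt n
    rw [hmv, EuclideanSpace.norm_eq]
    simp
  rw [← hval]
  exact h

lemma schurNorm_Fmat (n : ℕ) (hn : 0 < n) : (Fmat n).schurNorm = Real.sqrt n := by
  refine le_antisymm (schurNorm_le _ fun i j => (Fmat_abs n i j).le) ?_
  have hbdd : BddAbove {x | ∃ C : Matrix (Fin n) (Fin n) ℂ, Matrix.copNorm C ≤ 1 ∧
      x = Matrix.copNorm (Matrix.hadamard (Fmat n) C)} :=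
    ⟨Real.sqrt n, fun x hx => schur_set_bound (Fmat n) (fun i j => (Fmat_abs n i j).le) x hx⟩
  have hmem : Matrix.copNorm (Matrix.hadamard (Fmat n) (C0 n)) ∈
      {x | ∃ C : Matrix (Fin n) (Fin n) ℂ, Matrix.copNorm C ≤ 1 ∧
        x = Matrix.copNorm (Matrix.hadamard (Fmat n) C)} :=
    ⟨C0 n, by rw [copNorm_eq]; exact C0_norm_le n hn, rfl⟩
  calc Real.sqrt n ≤ ‖Matrix.hadamard (Fmat n) (C0 n)‖ := sqrt_le_hadamard_C0 n hn
    _ = Matrix.copNorm (Matrix.hadamard (Fmat n) (C0 n)) := (copNorm_eq _).symm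
    _ ≤ (Fmat n).schurNorm := le_csSup hbdd hmem

end Aux

/-- The maximum Schur norm of an `n × n` complex matrix whose entries all have modulus at
most `1` equals `√n`: every such matrix has Schur norm at most `√n`, and some such matrix
(e.g. the Fourier matrix) attains `√n`. -/
theorem cn_eq_sqrt (n : ℕ) (hn : 0 < n) :
    IsGreatest {x | ∃ M : Matrix (Fin n) (Fin n) ℂ,
        (∀ i j, ‖M i j‖ ≤ 1) ∧ x = Matrix.schurNorm M}
      (Real.sqrt n) := by
  constructor
  · exact ⟨Fmat n, fun i j => (Fmat_abs n i j).le, (schurNorm_Fmat n hn).symm⟩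
  · rintro x ⟨M, hM, rfl⟩
    exact schurNorm_le M hM
end

section
/- Let n be a positive integer and let M be an n×n real matrix all of whose entries have absolute value at most 1. Then ‖M‖_S ≤ √n; that is, for every n×n complex matrix C with ‖C‖ ≤ 1 one has ‖M ∘ C‖ ≤ √n. -/
open scoped ComplexOrder

/-- If `M` is an `n × n` real matrix all of whose entries have absolute value at most `1`,
then its Schur norm is at most `√n`; equivalently, `‖M ∘ C‖ ≤ √n` for every complex
contraction `C`. -/
theorem rn_le_sqrt (n : ℕ) (hn : 0 < n) (M : Matrix (Fin n) (Fin n) ℝ)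
    (h : ∀ i j, |M i j| ≤ 1) :
    Matrix.schurNorm (M.map Complex.ofReal) ≤ Real.sqrt n ∧
      ∀ C : Matrix (Fin n) (Fin n) ℂ, Matrix.copNorm C ≤ 1 →
        Matrix.copNorm (Matrix.hadamard (M.map Complex.ofReal) C) ≤ Real.sqrt n := by
  have key : ∀ C : Matrix (Fin n) (Fin n) ℂ, Matrix.copNorm C ≤ 1 →
      Matrix.copNorm (Matrix.hadamard (M.map Complex.ofReal) C) ≤ Real.sqrt n := by
    intro C hC
    have hC0 : (0:ℝ) ≤ Matrix.copNorm C := norm_nonneg _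
    -- columns of C have squared norm at most 1
    have hcol : ∀ j, ∑ i, ‖C i j‖ ^ 2 ≤ 1 := by
      intro j
      set e : EuclideanSpace ℂ (Fin n) := (WithLp.equiv 2 (Fin n → ℂ)).symm (Pi.single j 1)
      have he : ‖e‖ = 1 := by
        rw [EuclideanSpace.norm_eq]
        have : ∀ i, ‖(WithLp.equiv 2 (Fin n → ℂ)).symm (Pi.single j 1) i‖ ^ 2
            = if i = j then (1:ℝ) else 0 := by
          intro i
          rcases eq_or_ne i j with rfl | hij
          · simp [e, WithLp.equiv_symm_apply, PiLp.toLp_apply]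
          · simp [e, WithLp.equiv_symm_apply, PiLp.toLp_apply, Pi.single_apply, hij]
        simp only [e, this]
        simp
      have h1 : ‖Matrix.toEuclideanLin C e‖ ≤ Matrix.copNorm C * ‖e‖ :=
        (LinearMap.toContinuousLinearMap (Matrix.toEuclideanLin C)).le_opNorm e
      rw [he, mul_one] at h1
      have h2 : ‖Matrix.toEuclideanLin C e‖ ^ 2 = ∑ i, ‖C i j‖ ^ 2 := by
        rw [EuclideanSpace.norm_eq, Real.sq_sqrt (by positivity)]
        simp only [e, WithLp.equiv_symm_apply, Matrix.toEuclideanLin_apply_piLp_toLp, WithLp.ofLp_toLp,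
          Matrix.mulVec_single, mul_one, MulOpposite.op_one, one_smul, Matrix.col_apply]
      calc ∑ i, ‖C i j‖ ^ 2 = ‖Matrix.toEuclideanLin C e‖ ^ 2 := h2.symm
        _ ≤ Matrix.copNorm C ^ 2 := by
            exact pow_le_pow_left₀ (norm_nonneg _) h1 2
        _ ≤ 1 := by nlinarith
    -- entrywise bound on the hadamard product
    set A : Matrix (Fin n) (Fin n) ℂ := Matrix.hadamard (M.map Complex.ofReal) C with hA
    have hAC : ∀ i j, ‖A i j‖ ≤ ‖C i j‖ := by
      intro i j
      have : ‖A i j‖ = |M i j| * ‖C i j‖ := by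
        simp [hA, Matrix.hadamard, Complex.norm_real]
      rw [this]
      exact mul_le_of_le_one_left (norm_nonneg _) (h i j)
    -- Frobenius bound
    have hFrob : ∑ i, ∑ j, ‖A i j‖ ^ 2 ≤ (n : ℝ) := by
      calc ∑ i, ∑ j, ‖A i j‖ ^ 2 ≤ ∑ i, ∑ j, ‖C i j‖ ^ 2 := by
            refine Finset.sum_le_sum fun i _ => Finset.sum_le_sum fun j _ => ?_
            exact pow_le_pow_left₀ (norm_nonneg _) (hAC i j) 2
        _ = ∑ j, ∑ i, ‖C i j‖ ^ 2 := Finset.sum_comm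
        _ ≤ ∑ _j : Fin n, (1:ℝ) := Finset.sum_le_sum fun j _ => hcol j
        _ = (n : ℝ) := by simp
    -- operator norm bound
    rw [Matrix.copNorm]
    refine ContinuousLinearMap.opNorm_le_bound _ (Real.sqrt_nonneg n) fun x => ?_
    have hx2 : ∑ j, ‖x j‖ ^ 2 = ‖x‖ ^ 2 := by
      rw [EuclideanSpace.norm_eq, Real.sq_sqrt (by positivity)]
    have hnormsq : ‖Matrix.toEuclideanLin A x‖ ^ 2 ≤ (n : ℝ) * ‖x‖ ^ 2 := by
      rw [EuclideanSpace.norm_eq, Real.sq_sqrt (by positivity)]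
      have hrow : ∀ i, ‖(Matrix.toEuclideanLin A x) i‖ ^ 2
          ≤ (∑ j, ‖A i j‖ ^ 2) * ‖x‖ ^ 2 := by
        intro i
        have hval : (Matrix.toEuclideanLin A x) i = ∑ j, A i j * x j := by
          rw [Matrix.toEuclideanLin_apply]
          rfl
        calc ‖(Matrix.toEuclideanLin A x) i‖ ^ 2
            ≤ (∑ j, ‖A i j‖ * ‖x j‖) ^ 2 := by
              refine pow_le_pow_left₀ (norm_nonneg _) ?_ 2
              rw [hval]
              exact (norm_sum_le _ _).trans (le_of_eq (by simp [norm_mul]))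
          _ ≤ (∑ j, ‖A i j‖ ^ 2) * (∑ j, ‖x j‖ ^ 2) :=
              Finset.sum_mul_sq_le_sq_mul_sq _ _ _
          _ = (∑ j, ‖A i j‖ ^ 2) * ‖x‖ ^ 2 := by rw [hx2]
      calc ∑ i, ‖(Matrix.toEuclideanLin A x) i‖ ^ 2
          ≤ ∑ i, (∑ j, ‖A i j‖ ^ 2) * ‖x‖ ^ 2 := Finset.sum_le_sum fun i _ => hrow i
        _ = (∑ i, ∑ j, ‖A i j‖ ^ 2) * ‖x‖ ^ 2 := by rw [Finset.sum_mul]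
        _ ≤ (n : ℝ) * ‖x‖ ^ 2 := by nlinarith [sq_nonneg ‖x‖]
    have : ‖Matrix.toEuclideanLin A x‖ ≤ Real.sqrt ((n : ℝ) * ‖x‖ ^ 2) := by
      rw [← Real.sqrt_sq (norm_nonneg (Matrix.toEuclideanLin A x))]
      exact Real.sqrt_le_sqrt hnormsq
    calc ‖LinearMap.toContinuousLinearMap (Matrix.toEuclideanLin A) x‖
        = ‖Matrix.toEuclideanLin A x‖ := by simp
      _ ≤ Real.sqrt ((n : ℝ) * ‖x‖ ^ 2) := this
      _ = Real.sqrt n * ‖x‖ := by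
          rw [Real.sqrt_mul (Nat.cast_nonneg n), Real.sqrt_sq (norm_nonneg x)]
  refine ⟨?_, key⟩
  apply Real.sSup_le
  · rintro x ⟨C, hC, rfl⟩
    exact key C hC
  · exact Real.sqrt_nonneg n
end

section
/- For every positive integer n, the supremum r_n of ‖M‖_S over all n×n real matrices M with entries of absolute value at most 1 is attained at a matrix all of whose entries are ±1. That is, r_n = max{‖M‖_S : M an n×n matrix with entries in {−1, 1}}. -/
open scoped ComplexOrder

section Aux

variable {n : Type*} [Fintype n] [DecidableEq n]

set_option linter.unusedSectionVars false

theorem aux_coord_le_norm (v : EuclideanSpace ℂ n) (i : n) : ‖v i‖ ≤ ‖v‖ := by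
  rw [EuclideanSpace.norm_eq]
  have : ‖v i‖ ^ 2 ≤ ∑ j, ‖v j‖ ^ 2 :=
    Finset.single_le_sum (f := fun j => ‖v j‖ ^ 2) (fun j _ => sq_nonneg _) (Finset.mem_univ i)
  calc ‖v i‖ = Real.sqrt (‖v i‖ ^ 2) := by rw [Real.sqrt_sq (norm_nonneg _)]
    _ ≤ _ := Real.sqrt_le_sqrt this

theorem aux_norm_le_sum_norm (v : EuclideanSpace ℂ n) : ‖v‖ ≤ ∑ i, ‖v i‖ := by
  have hv : v = ∑ i, EuclideanSpace.single i (v i) := by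
    ext j
    rw [WithLp.ofLp_sum, Finset.sum_apply]
    simp [EuclideanSpace.single_apply]
  calc ‖v‖ = ‖∑ i, EuclideanSpace.single i (v i)‖ := by rw [← hv]
    _ ≤ ∑ i, ‖EuclideanSpace.single i (v i)‖ := norm_sum_le _ _
    _ = ∑ i, ‖v i‖ := by simp [EuclideanSpace.norm_single]

theorem aux_mulVec_norm_le (A : Matrix n n ℂ) (v : EuclideanSpace ℂ n) :
    ‖(Matrix.toEuclideanLin A) v‖ ≤ Matrix.copNorm A * ‖v‖ :=
  (LinearMap.toContinuousLinearMap (Matrix.toEuclideanLin A)).le_opNorm v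

theorem aux_entry_le_copNorm (C : Matrix n n ℂ) (i j : n) : ‖C i j‖ ≤ Matrix.copNorm C := by
  have h1 : (Matrix.toEuclideanLin C) (EuclideanSpace.single j 1) = fun i => C i j := by
    rw [Matrix.toEuclideanLin_apply]
    ext i
    simp [Matrix.mulVec_single]
  have h2 : ‖C i j‖ ≤ ‖(Matrix.toEuclideanLin C) (EuclideanSpace.single j 1)‖ := by
    have := aux_coord_le_norm ((Matrix.toEuclideanLin C) (EuclideanSpace.single j 1)) i
    rwa [show ((Matrix.toEuclideanLin C) (EuclideanSpace.single j 1)) i = C i j by rw [h1]] at this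
  calc ‖C i j‖ ≤ ‖(Matrix.toEuclideanLin C) (EuclideanSpace.single j 1)‖ := h2
    _ ≤ Matrix.copNorm C * ‖EuclideanSpace.single j 1‖ := aux_mulVec_norm_le _ _
    _ = Matrix.copNorm C := by rw [EuclideanSpace.norm_single]; simp

theorem aux_copNorm_le_sum (A : Matrix n n ℂ) : Matrix.copNorm A ≤ ∑ i, ∑ j, ‖A i j‖ := by
  refine ContinuousLinearMap.opNorm_le_bound _ (by positivity) fun v => ?_
  have key : ∀ i, ‖(Matrix.toEuclideanLin A v) i‖ ≤ (∑ j, ‖A i j‖) * ‖v‖ := by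
    intro i
    have : (Matrix.toEuclideanLin A v) i = ∑ j, A i j * v j := by
      rw [Matrix.toEuclideanLin_apply]
      simp [Matrix.mulVec, dotProduct]
    rw [this, Finset.sum_mul]
    refine (norm_sum_le _ _).trans (Finset.sum_le_sum fun j _ => ?_)
    rw [norm_mul]
    exact mul_le_mul_of_nonneg_left (aux_coord_le_norm v j) (norm_nonneg _)
  calc ‖LinearMap.toContinuousLinearMap (Matrix.toEuclideanLin A) v‖
      = ‖Matrix.toEuclideanLin A v‖ := by simp
    _ ≤ ∑ i, ‖(Matrix.toEuclideanLin A v) i‖ := aux_norm_le_sum_norm _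
    _ ≤ ∑ i, (∑ j, ‖A i j‖) * ‖v‖ := Finset.sum_le_sum fun i _ => key i
    _ = (∑ i, ∑ j, ‖A i j‖) * ‖v‖ := by rw [Finset.sum_mul]

theorem aux_copNorm_zero : Matrix.copNorm (0 : Matrix n n ℂ) = 0 := by
  unfold Matrix.copNorm
  rw [map_zero, map_zero, norm_zero]

theorem aux_copNorm_add_le (A B : Matrix n n ℂ) :
    Matrix.copNorm (A + B) ≤ Matrix.copNorm A + Matrix.copNorm B := by
  unfold Matrix.copNorm
  rw [map_add, map_add]
  exact norm_add_le _ _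

theorem aux_copNorm_smul_le (a : ℝ) (ha : 0 ≤ a) (A : Matrix n n ℂ) :
    Matrix.copNorm ((a : ℂ) • A) ≤ a * Matrix.copNorm A := by
  refine ContinuousLinearMap.opNorm_le_bound _ (mul_nonneg ha (norm_nonneg _)) fun v => ?_
  have h1 : LinearMap.toContinuousLinearMap (Matrix.toEuclideanLin ((a : ℂ) • A)) v
      = (a : ℂ) • (Matrix.toEuclideanLin A v) := by
    rw [LinearMap.coe_toContinuousLinearMap', map_smul, LinearMap.smul_apply]
  rw [h1, norm_smul]
  simp only [Complex.norm_real, Real.norm_eq_abs, abs_of_nonneg ha]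
  rw [mul_assoc]
  exact mul_le_mul_of_nonneg_left (aux_mulVec_norm_le A v) ha

theorem aux_copNorm_real_smul (a : ℝ) (ha : 0 ≤ a) (A : Matrix n n ℂ) :
    Matrix.copNorm ((a : ℂ) • A) = a * Matrix.copNorm A := by
  refine le_antisymm (aux_copNorm_smul_le a ha A) ?_
  by_cases h : a = 0
  · subst h
    push_cast
    rw [zero_smul, zero_mul]
    exact aux_copNorm_zero.ge
  · have hpos : 0 < a := lt_of_le_of_ne ha (Ne.symm h)
    have key := aux_copNorm_smul_le a⁻¹ (by positivity) ((a : ℂ) • A)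
    have hAA : ((a⁻¹ : ℝ) : ℂ) • ((a : ℂ) • A) = A := by
      rw [smul_smul, ← Complex.ofReal_mul, inv_mul_cancel₀ h, Complex.ofReal_one, one_smul]
    rw [hAA] at key
    calc a * Matrix.copNorm A ≤ a * (a⁻¹ * Matrix.copNorm ((a : ℂ) • A)) :=
          mul_le_mul_of_nonneg_left key ha
      _ = Matrix.copNorm ((a : ℂ) • A) := by field_simp

/-- The Schur set of `M` is nonempty. -/
theorem aux_schurSet_nonempty (M : Matrix n n ℂ) :
    Set.Nonempty {x | ∃ C : Matrix n n ℂ, Matrix.copNorm C ≤ 1 ∧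
      x = Matrix.copNorm (Matrix.hadamard M C)} :=
  ⟨Matrix.copNorm (Matrix.hadamard M 0), 0, by rw [aux_copNorm_zero]; exact zero_le_one, rfl⟩

/-- The Schur set of `M` is bounded above. -/
theorem aux_schurSet_bdd (M : Matrix n n ℂ) :
    BddAbove {x | ∃ C : Matrix n n ℂ, Matrix.copNorm C ≤ 1 ∧
      x = Matrix.copNorm (Matrix.hadamard M C)} := by
  refine ⟨∑ i, ∑ j, ‖M i j‖, fun x hx => ?_⟩
  obtain ⟨C, hC, rfl⟩ := hx
  refine (aux_copNorm_le_sum _).trans ?_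
  refine Finset.sum_le_sum fun i _ => Finset.sum_le_sum fun j _ => ?_
  rw [Matrix.hadamard_apply, norm_mul]
  calc ‖M i j‖ * ‖C i j‖ ≤ ‖M i j‖ * 1 :=
        mul_le_mul_of_nonneg_left ((aux_entry_le_copNorm C i j).trans hC) (norm_nonneg _)
    _ = ‖M i j‖ := mul_one _

theorem aux_le_schurNorm (M C : Matrix n n ℂ) (hC : Matrix.copNorm C ≤ 1) :
    Matrix.copNorm (Matrix.hadamard M C) ≤ Matrix.schurNorm M :=
  le_csSup (aux_schurSet_bdd M) ⟨C, hC, rfl⟩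

/-- Convexity of the Schur norm. -/
theorem aux_schurNorm_convex (M N : Matrix n n ℂ) (a b : ℝ) (ha : 0 ≤ a) (hb : 0 ≤ b)
    (hab : a + b = 1) :
    Matrix.schurNorm ((a : ℂ) • M + (b : ℂ) • N) ≤
      a * Matrix.schurNorm M + b * Matrix.schurNorm N := by
  refine csSup_le (aux_schurSet_nonempty _) fun x hx => ?_
  obtain ⟨C, hC, rfl⟩ := hx
  have hdist : Matrix.hadamard ((a : ℂ) • M + (b : ℂ) • N) C =
      (a : ℂ) • Matrix.hadamard M C + (b : ℂ) • Matrix.hadamard N C := by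
    rw [Matrix.add_hadamard, Matrix.smul_hadamard, Matrix.smul_hadamard]
  calc Matrix.copNorm (Matrix.hadamard ((a : ℂ) • M + (b : ℂ) • N) C)
      = Matrix.copNorm ((a : ℂ) • Matrix.hadamard M C + (b : ℂ) • Matrix.hadamard N C) := by
        rw [hdist]
    _ ≤ Matrix.copNorm ((a : ℂ) • Matrix.hadamard M C) +
          Matrix.copNorm ((b : ℂ) • Matrix.hadamard N C) := aux_copNorm_add_le _ _
    _ = a * Matrix.copNorm (Matrix.hadamard M C) + b * Matrix.copNorm (Matrix.hadamard N C) := by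
        rw [aux_copNorm_real_smul a ha, aux_copNorm_real_smul b hb]
    _ ≤ a * Matrix.schurNorm M + b * Matrix.schurNorm N := by
        gcongr
        · exact aux_le_schurNorm M C hC
        · exact aux_le_schurNorm N C hC

end Aux

section Main

variable {n : ℕ}

/-- Real version of convexity, through `map ofReal`. -/
theorem aux_f_convex (M N : Matrix (Fin n) (Fin n) ℝ) (a b : ℝ) (ha : 0 ≤ a) (hb : 0 ≤ b)
    (hab : a + b = 1) :
    Matrix.schurNorm ((a • M + b • N).map Complex.ofReal) ≤
      a * Matrix.schurNorm (M.map Complex.ofReal) + b * Matrix.schurNorm (N.map Complex.ofReal) := by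
  have hmap : (a • M + b • N).map Complex.ofReal =
      (a : ℂ) • M.map Complex.ofReal + (b : ℂ) • N.map Complex.ofReal := by
    ext i j
    simp only [Matrix.map_apply, Matrix.add_apply, Matrix.smul_apply, smul_eq_mul]
    push_cast
    ring
  rw [hmap]
  exact aux_schurNorm_convex _ _ a b ha hb hab

/-- One-entry replacement: we can push one entry to `±1` without decreasing the Schur norm. -/
theorem aux_one_step (M : Matrix (Fin n) (Fin n) ℝ) (hM : ∀ i j, |M i j| ≤ 1)
    (p : Fin n × Fin n) :
    ∃ M' : Matrix (Fin n) (Fin n) ℝ,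
      (∀ i j, (i, j) ≠ p → M' i j = M i j) ∧
      (M' p.1 p.2 = 1 ∨ M' p.1 p.2 = -1) ∧
      (∀ i j, |M' i j| ≤ 1) ∧
      Matrix.schurNorm (M.map Complex.ofReal) ≤ Matrix.schurNorm (M'.map Complex.ofReal) := by
  classical
  set t := M p.1 p.2 with ht
  set Mp : Matrix (Fin n) (Fin n) ℝ := Matrix.of (fun i j => if (i, j) = p then 1 else M i j)
  set Mm : Matrix (Fin n) (Fin n) ℝ := Matrix.of (fun i j => if (i, j) = p then -1 else M i j)
  have hMp : ∀ i j, |Mp i j| ≤ 1 := by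
    intro i j
    by_cases h : (i, j) = p <;> simp [Mp, h, hM i j]
  have hMm : ∀ i j, |Mm i j| ≤ 1 := by
    intro i j
    by_cases h : (i, j) = p <;> simp [Mm, h, hM i j]
  set a := (1 + t) / 2 with hadef
  set b := (1 - t) / 2 with hbdef
  have hta : |t| ≤ 1 := hM p.1 p.2
  obtain ⟨hta1, hta2⟩ := abs_le.mp hta
  have ha : 0 ≤ a := by rw [hadef]; linarith
  have hb : 0 ≤ b := by rw [hbdef]; linarith
  have hab : a + b = 1 := by rw [hadef, hbdef]; ring
  have hcomb : M = a • Mp + b • Mm := by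
    ext i j
    by_cases h : (i, j) = p
    · simp only [Matrix.add_apply, Matrix.smul_apply, Mp, Mm, Matrix.of_apply, smul_eq_mul]
      rw [if_pos h, if_pos h]
      have hij : i = p.1 ∧ j = p.2 := Prod.ext_iff.mp h
      rw [hij.1, hij.2, ← ht, hadef, hbdef]
      ring
    · simp only [Matrix.add_apply, Matrix.smul_apply, Mp, Mm, Matrix.of_apply, smul_eq_mul]
      rw [if_neg h, if_neg h]
      linear_combination (M i j) * hab.symm
  have hconv := aux_f_convex Mp Mm a b ha hb hab
  rw [← hcomb] at hconv
  -- one of the two is at least the value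
  by_cases hcmp : Matrix.schurNorm (Mp.map Complex.ofReal) ≤ Matrix.schurNorm (Mm.map Complex.ofReal)
  · refine ⟨Mm, fun i j h => by simp [Mm, h], by simp [Mm], hMm, ?_⟩
    calc Matrix.schurNorm (M.map Complex.ofReal)
        ≤ a * Matrix.schurNorm (Mp.map Complex.ofReal) +
            b * Matrix.schurNorm (Mm.map Complex.ofReal) := hconv
      _ ≤ a * Matrix.schurNorm (Mm.map Complex.ofReal) +
            b * Matrix.schurNorm (Mm.map Complex.ofReal) := by gcongr
      _ = Matrix.schurNorm (Mm.map Complex.ofReal) := by rw [← add_mul, hab, one_mul]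
  · push_neg at hcmp
    refine ⟨Mp, fun i j h => by simp [Mp, h], by simp [Mp], hMp, ?_⟩
    calc Matrix.schurNorm (M.map Complex.ofReal)
        ≤ a * Matrix.schurNorm (Mp.map Complex.ofReal) +
            b * Matrix.schurNorm (Mm.map Complex.ofReal) := hconv
      _ ≤ a * Matrix.schurNorm (Mp.map Complex.ofReal) +
            b * Matrix.schurNorm (Mp.map Complex.ofReal) := by gcongr
      _ = Matrix.schurNorm (Mp.map Complex.ofReal) := by rw [← add_mul, hab, one_mul]

/-- Iterated replacement over a finite set of positions. -/
theorem aux_steps (s : Finset (Fin n × Fin n)) :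
    ∀ M : Matrix (Fin n) (Fin n) ℝ, (∀ i j, |M i j| ≤ 1) →
    ∃ M' : Matrix (Fin n) (Fin n) ℝ,
      (∀ i j, |M' i j| ≤ 1) ∧
      (∀ p ∈ s, M' p.1 p.2 = 1 ∨ M' p.1 p.2 = -1) ∧
      Matrix.schurNorm (M.map Complex.ofReal) ≤ Matrix.schurNorm (M'.map Complex.ofReal) := by
  classical
  induction s using Finset.induction_on with
  | empty => exact fun M hM => ⟨M, hM, fun p hp => absurd hp (Finset.notMem_empty p), le_refl _⟩
  | @insert q s hq ih =>
    intro M hM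
    obtain ⟨M₁, hM₁, hsign₁, hle₁⟩ := ih M hM
    obtain ⟨M₂, hagree, hsignq, hM₂, hle₂⟩ := aux_one_step M₁ hM₁ q
    refine ⟨M₂, hM₂, ?_, hle₁.trans hle₂⟩
    intro p hp
    rcases Finset.mem_insert.mp hp with h | h
    · rw [h]; exact hsignq
    · by_cases hpq : (p.1, p.2) = q
      · rw [show p.1 = q.1 from by rw [← hpq], show p.2 = q.2 from by rw [← hpq]]
        exact hsignq
      · rw [hagree p.1 p.2 hpq]
        exact hsign₁ p h

/-- Sign matrix from a boolean pattern. -/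
def signMat (b : Fin n → Fin n → Bool) : Matrix (Fin n) (Fin n) ℝ :=
  Matrix.of (fun i j => if b i j then 1 else -1)

theorem signMat_pm (b : Fin n → Fin n → Bool) (i j : Fin n) :
    signMat b i j = 1 ∨ signMat b i j = -1 := by
  unfold signMat
  by_cases h : b i j <;> simp [h]

theorem signMat_abs (b : Fin n → Fin n → Bool) (i j : Fin n) : |signMat b i j| ≤ 1 := by
  rcases signMat_pm b i j with h | h <;> rw [h] <;> norm_num

/-- The supremum `r n` of Schur norms of `n × n` real matrices with entries of absolute
value at most one is attained at a matrix all of whose entries are `±1`. -/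
theorem rn_attained_at_sign_matrix (n : ℕ) (hn : 0 < n) :
    ∃ M : Matrix (Fin n) (Fin n) ℝ, (∀ i j, M i j = 1 ∨ M i j = -1) ∧
      Matrix.schurNorm (M.map Complex.ofReal) = rSchur n := by
  classical
  -- maximize over sign patterns
  obtain ⟨b0, -, hb0⟩ := Finset.exists_max_image (Finset.univ : Finset (Fin n → Fin n → Bool))
    (fun b => Matrix.schurNorm ((signMat b).map Complex.ofReal)) ⟨fun _ _ => true, Finset.mem_univ _⟩
  refine ⟨signMat b0, signMat_pm b0, ?_⟩
  have hgreatest : IsGreatest {x | ∃ M : Matrix (Fin n) (Fin n) ℝ, (∀ i j, |M i j| ≤ 1) ∧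
      x = Matrix.schurNorm (M.map Complex.ofReal)}
      (Matrix.schurNorm ((signMat b0).map Complex.ofReal)) := by
    constructor
    · exact ⟨signMat b0, signMat_abs b0, rfl⟩
    · rintro x ⟨M, hM, rfl⟩
      obtain ⟨M', hM', hsign, hle⟩ := aux_steps Finset.univ M hM
      -- M' is a sign matrix
      set b : Fin n → Fin n → Bool := fun i j => decide (M' i j = 1) with hbdef
      have hM'eq : M' = signMat b := by
        ext i j
        rcases hsign (i, j) (Finset.mem_univ _) with h | h
        · simp [signMat, hbdef, h]
        · have hne : ¬ (M' i j = 1) := by rw [h]; norm_num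
          simp only [signMat, hbdef, Matrix.of_apply, h, decide_eq_true_eq]
          norm_num
      refine hle.trans ?_
      rw [hM'eq]
      exact hb0 b (Finset.mem_univ b)
  unfold rSchur
  exact hgreatest.csSup_eq.symm

end Main
end

section
/- Let n be a positive integer and let M be an n×n matrix with all entries in {−1, 1}. Then there exists an (n+1)×(n+1) matrix N with all entries in {−1, 1} such that ‖N‖_S = ‖M‖_S. In other words, σ_n ⊆ σ_{n+1}, where σ_n denotes the set of Schur norms of n×n sign matrices. -/
open scoped ComplexOrder

set_option maxHeartbeats 1000000

namespace Schur

variable {m n : ℕ}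

abbrev E (m : ℕ) := EuclideanSpace ℂ (Fin m)

noncomputable def app (A : Matrix (Fin m) (Fin n) ℂ) (x : E n) : E m :=
  Matrix.toEuclideanLin A x

lemma app_apply (A : Matrix (Fin m) (Fin n) ℂ) (x : E n) (i : Fin m) :
    app A x i = ∑ j, A i j * x j := by
  simp [app, Matrix.toEuclideanLin_apply, Matrix.mulVec, dotProduct]

lemma copNorm_nonneg (A : Matrix (Fin m) (Fin n) ℂ) : 0 ≤ A.copNorm := norm_nonneg _

lemma norm_app_le (A : Matrix (Fin m) (Fin n) ℂ) (x : E n) :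
    ‖app A x‖ ≤ A.copNorm * ‖x‖ :=
  (LinearMap.toContinuousLinearMap (Matrix.toEuclideanLin A)).le_opNorm x

lemma copNorm_le (A : Matrix (Fin m) (Fin n) ℂ) {c : ℝ} (hc : 0 ≤ c)
    (h : ∀ x : E n, ‖app A x‖ ≤ c * ‖x‖) : A.copNorm ≤ c :=
  ContinuousLinearMap.opNorm_le_bound _ hc h

lemma norm_sq_eq (x : E m) : ‖x‖ ^ 2 = ∑ i, ‖x i‖ ^ 2 := by
  rw [EuclideanSpace.norm_eq, Real.sq_sqrt]
  positivity

lemma norm_le_of_sq (x : E m) {c : ℝ} (hc : 0 ≤ c) (h : ∑ i, ‖x i‖ ^ 2 ≤ c ^ 2) :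
    ‖x‖ ≤ c := by
  rw [← Real.sqrt_sq hc, EuclideanSpace.norm_eq]
  exact Real.sqrt_le_sqrt (by simpa using h)

lemma coord_le_norm (x : E m) (i : Fin m) : ‖x i‖ ≤ ‖x‖ := by
  rw [EuclideanSpace.norm_eq]
  have h : ‖x i‖ ^ 2 ≤ ∑ i, ‖x i‖ ^ 2 :=
    Finset.single_le_sum (f := fun i => ‖x i‖ ^ 2) (fun _ _ => by positivity) (Finset.mem_univ i)
  calc ‖x i‖ = Real.sqrt (‖x i‖ ^ 2) := (Real.sqrt_sq (norm_nonneg _)).symm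
    _ ≤ _ := Real.sqrt_le_sqrt h

lemma cs_complex {ι : Type*} (s : Finset ι) (f g : ι → ℂ) :
    ‖∑ i ∈ s, f i * g i‖ ^ 2 ≤ (∑ i ∈ s, ‖f i‖ ^ 2) * ∑ i ∈ s, ‖g i‖ ^ 2 := by
  calc ‖∑ i ∈ s, f i * g i‖ ^ 2 ≤ (∑ i ∈ s, ‖f i‖ * ‖g i‖) ^ 2 := by
        have h := (norm_sum_le s (fun i => f i * g i)).trans
          (le_of_eq (Finset.sum_congr rfl fun i _ => norm_mul _ _))
        exact pow_le_pow_left₀ (norm_nonneg _) h 2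
    _ ≤ _ := Finset.sum_mul_sq_le_sq_mul_sq s _ _

lemma copNorm_le_frobenius (A : Matrix (Fin m) (Fin n) ℂ) :
    A.copNorm ≤ Real.sqrt (∑ i, ∑ j, ‖A i j‖ ^ 2) := by
  refine copNorm_le A (Real.sqrt_nonneg _) fun x => ?_
  refine norm_le_of_sq _ (by positivity) ?_
  rw [mul_pow, Real.sq_sqrt (by positivity), norm_sq_eq]
  calc ∑ i, ‖app A x i‖ ^ 2 ≤ ∑ i, (∑ j, ‖A i j‖ ^ 2) * ∑ j, ‖x j‖ ^ 2 := by
        refine Finset.sum_le_sum fun i _ => ?_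
        rw [app_apply]
        exact cs_complex _ _ _
    _ = _ := by rw [← Finset.sum_mul]

lemma entry_le_copNorm (A : Matrix (Fin m) (Fin n) ℂ) (i : Fin m) (j : Fin n) :
    ‖A i j‖ ≤ A.copNorm := by
  have h1 : app A (EuclideanSpace.single j 1) i = A i j := by
    rw [app_apply]
    simp [EuclideanSpace.single_apply]
  calc ‖A i j‖ = ‖app A (EuclideanSpace.single j 1) i‖ := by rw [h1]
    _ ≤ ‖app A (EuclideanSpace.single j 1)‖ := coord_le_norm _ _
    _ ≤ A.copNorm * ‖(EuclideanSpace.single j (1:ℂ) : E n)‖ := norm_app_le _ _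
    _ = A.copNorm := by rw [EuclideanSpace.norm_single]; simp

def sset {k : ℕ} (P : Matrix (Fin k) (Fin k) ℂ) : Set ℝ :=
  {x | ∃ C : Matrix (Fin k) (Fin k) ℂ, Matrix.copNorm C ≤ 1 ∧ x = Matrix.copNorm (Matrix.hadamard P C)}

lemma schurNorm_eq {k : ℕ} (P : Matrix (Fin k) (Fin k) ℂ) : P.schurNorm = sSup (sset P) := rfl

lemma copNorm_zero {k l : ℕ} : (0 : Matrix (Fin k) (Fin l) ℂ).copNorm = 0 := by
  simp [Matrix.copNorm]

lemma zero_mem_sset {k : ℕ} (P : Matrix (Fin k) (Fin k) ℂ) : (0:ℝ) ∈ sset P :=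
  ⟨0, by rw [copNorm_zero]; norm_num, by rw [Matrix.hadamard_zero, copNorm_zero]⟩

lemma bddAbove_sset {k : ℕ} (P : Matrix (Fin k) (Fin k) ℂ) : BddAbove (sset P) := by
  refine ⟨Real.sqrt (∑ i, ∑ j, ‖P i j‖ ^ 2), fun x hx => ?_⟩
  obtain ⟨C, hC, rfl⟩ := hx
  refine (copNorm_le_frobenius _).trans (Real.sqrt_le_sqrt ?_)
  refine Finset.sum_le_sum fun i _ => Finset.sum_le_sum fun j _ => ?_
  rw [Matrix.hadamard_apply, norm_mul]
  have h := (entry_le_copNorm C i j).trans hC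
  have h2 : ‖P i j‖ * ‖C i j‖ ≤ ‖P i j‖ * 1 := by
    exact mul_le_mul_of_nonneg_left h (norm_nonneg _)
  rw [mul_one] at h2
  exact pow_le_pow_left₀ (by positivity) h2 2

lemma schurNorm_nonneg {k : ℕ} (P : Matrix (Fin k) (Fin k) ℂ) : 0 ≤ P.schurNorm :=
  le_csSup (bddAbove_sset P) (zero_mem_sset P)

section Dup

variable (n : ℕ) (hn : 0 < n)

def f : Fin (n + 1) → Fin n := fun i =>
  if h : (i : ℕ) < n then ⟨i, h⟩ else ⟨n - 1, by omega⟩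

def fib (k : Fin n) : Finset (Fin (n + 1)) := Finset.univ.filter (fun i => f n hn i = k)

lemma sum_fib {β : Type*} [AddCommMonoid β] (g : Fin (n + 1) → β) :
    ∑ i, g i = ∑ k, ∑ i ∈ fib n hn k, g i :=
  (Finset.sum_fiberwise_of_maps_to (fun i _ => Finset.mem_univ (f n hn i)) g).symm

lemma f_mem {k : Fin n} {i : Fin (n + 1)} (hi : i ∈ fib n hn k) : f n hn i = k := by
  simpa [fib] using hi

lemma f_castSucc (k : Fin n) : f n hn (Fin.castSucc k) = k := by
  have h : ((Fin.castSucc k : Fin (n+1)) : ℕ) < n := k.is_lt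
  simp only [f, dif_pos h]
  ext; simp

def pad (A : Matrix (Fin n) (Fin n) ℂ) : Matrix (Fin (n + 1)) (Fin (n + 1)) ℂ :=
  Matrix.of fun i j => if h : (i : ℕ) < n ∧ (j : ℕ) < n then A ⟨i, h.1⟩ ⟨j, h.2⟩ else 0

def dup (A : Matrix (Fin n) (Fin n) ℂ) : Matrix (Fin (n + 1)) (Fin (n + 1)) ℂ :=
  Matrix.of fun i j => A (f n hn i) (f n hn j)

def rtr (x : E (n + 1)) : E n := WithLp.toLp 2 (fun k => x (Fin.castSucc k))

def ext0 (x : E n) : E (n + 1) := WithLp.toLp 2 (fun (i : Fin (n + 1)) => if h : (i : ℕ) < n then x ⟨i, h⟩ else 0)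

lemma castSucc_lt (k : Fin n) : ((Fin.castSucc k : Fin (n + 1)) : ℕ) < n := by
  simpa using k.is_lt

lemma mk_castSucc (k : Fin n) (h : ((Fin.castSucc k : Fin (n + 1)) : ℕ) < n) :
    (⟨((Fin.castSucc k : Fin (n + 1)) : ℕ), h⟩ : Fin n) = k := by
  ext; simp

lemma app_pad (A : Matrix (Fin n) (Fin n) ℂ) (x' : E (n + 1)) (i : Fin (n + 1)) :
    app (pad n A) x' i = if h : (i : ℕ) < n then app A (rtr n x') ⟨i, h⟩ else 0 := by
  rw [app_apply]
  by_cases h : (i : ℕ) < n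
  · rw [dif_pos h, app_apply, Fin.sum_univ_castSucc]
    have hlast : pad n A i (Fin.last n) * x' (Fin.last n) = 0 := by
      simp [pad, h]
    rw [hlast, add_zero]
    refine Finset.sum_congr rfl fun j _ => ?_
    have hj : ((Fin.castSucc j : Fin (n+1)) : ℕ) < n := castSucc_lt n j
    have hcond : (i : ℕ) < n ∧ ((Fin.castSucc j : Fin (n+1)) : ℕ) < n := ⟨h, hj⟩
    have hp : pad n A i (Fin.castSucc j) = A ⟨i, h⟩ j := by
      simp only [pad, Matrix.of_apply, dif_pos hcond]
      congr 1
    rw [hp]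
    rfl
  · rw [dif_neg h]
    refine Finset.sum_eq_zero fun j _ => ?_
    simp [pad, h]

lemma normsq_app_pad (A : Matrix (Fin n) (Fin n) ℂ) (x' : E (n + 1)) :
    ∑ i, ‖app (pad n A) x' i‖ ^ 2 = ∑ k, ‖app A (rtr n x') k‖ ^ 2 := by
  rw [Fin.sum_univ_castSucc]
  have hlast : app (pad n A) x' (Fin.last n) = 0 := by
    rw [app_pad, dif_neg]; simp
  rw [hlast]
  simp only [norm_zero]
  rw [zero_pow (by norm_num), add_zero]
  refine Finset.sum_congr rfl fun k _ => ?_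
  rw [app_pad, dif_pos (castSucc_lt n k)]
  congr 2

lemma norm_app_pad (A : Matrix (Fin n) (Fin n) ℂ) (x' : E (n + 1)) :
    ‖app (pad n A) x'‖ = ‖app A (rtr n x')‖ := by
  rw [EuclideanSpace.norm_eq, EuclideanSpace.norm_eq]
  rw [show ∀ u : E (n+1), ∀ v : E n, (∑ i, ‖u i‖^2 = ∑ k, ‖v k‖^2) → Real.sqrt (∑ i, ‖u i‖^2) = Real.sqrt (∑ k, ‖v k‖^2) from fun u v h => by rw [h]]
  exact normsq_app_pad n A x'

lemma norm_rtr_le (x' : E (n + 1)) : ‖rtr n x'‖ ≤ ‖x'‖ := by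
  rw [EuclideanSpace.norm_eq, EuclideanSpace.norm_eq]
  refine Real.sqrt_le_sqrt ?_
  rw [Fin.sum_univ_castSucc (f := fun i => ‖x' i‖ ^ 2)]
  have : (0:ℝ) ≤ ‖x' (Fin.last n)‖ ^ 2 := by positivity
  calc ∑ k : Fin n, ‖rtr n x' k‖ ^ 2 = ∑ k : Fin n, ‖x' (Fin.castSucc k)‖ ^ 2 := rfl
    _ ≤ _ := le_add_of_nonneg_right this

lemma rtr_ext0 (x : E n) : rtr n (ext0 n x) = x := by
  refine PiLp.ext (p := 2) fun k => ?_
  simp only [rtr, ext0, WithLp.ofLp_toLp]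
  rw [dif_pos (castSucc_lt n k)]
  rw [mk_castSucc]

lemma norm_ext0 (x : E n) : ‖ext0 n x‖ = ‖x‖ := by
  rw [EuclideanSpace.norm_eq, EuclideanSpace.norm_eq]
  congr 1
  rw [Fin.sum_univ_castSucc (f := fun i => ‖ext0 n x i‖ ^ 2)]
  have hlast : ext0 n x (Fin.last n) = 0 := by simp [ext0]
  rw [hlast]
  simp only [norm_zero]
  rw [zero_pow (by norm_num), add_zero]
  refine Finset.sum_congr rfl fun k _ => ?_
  simp only [ext0, WithLp.ofLp_toLp]
  rw [dif_pos (castSucc_lt n k)]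
  congr 2

lemma copNorm_pad (A : Matrix (Fin n) (Fin n) ℂ) : (pad n A).copNorm = A.copNorm := by
  refine le_antisymm ?_ ?_
  · refine copNorm_le _ (copNorm_nonneg A) fun x' => ?_
    rw [norm_app_pad]
    calc ‖app A (rtr n x')‖ ≤ A.copNorm * ‖rtr n x'‖ := norm_app_le _ _
      _ ≤ A.copNorm * ‖x'‖ := by
          have := norm_rtr_le n x'
          have h0 := copNorm_nonneg A
          nlinarith
  · refine copNorm_le _ (copNorm_nonneg _) fun x => ?_
    have h1 : ‖app A x‖ = ‖app (pad n A) (ext0 n x)‖ := by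
      rw [norm_app_pad, rtr_ext0]
    rw [h1, ← norm_ext0 n x]
    exact norm_app_le _ _

lemma hadamard_dup_pad (A C : Matrix (Fin n) (Fin n) ℂ) :
    Matrix.hadamard (dup n hn A) (pad n C) = pad n (Matrix.hadamard A C) := by
  ext i j
  by_cases h : (i : ℕ) < n ∧ (j : ℕ) < n
  · have hfi : f n hn i = ⟨i, h.1⟩ := by simp only [f, dif_pos h.1]
    have hfj : f n hn j = ⟨j, h.2⟩ := by simp only [f, dif_pos h.2]
    simp [Matrix.hadamard_apply, dup, pad, dif_pos h, hfi, hfj]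
  · simp [Matrix.hadamard_apply, dup, pad, dif_neg h]

lemma schurNorm_le_dup (A : Matrix (Fin n) (Fin n) ℂ) :
    A.schurNorm ≤ (dup n hn A).schurNorm := by
  rw [schurNorm_eq, schurNorm_eq]
  refine csSup_le ⟨0, zero_mem_sset A⟩ ?_
  rintro x ⟨C, hC, rfl⟩
  refine le_csSup (bddAbove_sset _) ?_
  refine ⟨pad n C, ?_, ?_⟩
  · rw [copNorm_pad]; exact hC
  · rw [hadamard_dup_pad, copNorm_pad]

end Dup

section Main

open scoped InnerProductSpace

variable (n : ℕ) (hn : 0 < n)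

/-- fiberwise l2 mass of a vector. -/
noncomputable def aa (y : E (n + 1)) (k : Fin n) : ℝ :=
  Real.sqrt (∑ i ∈ fib n hn k, ‖y i‖ ^ 2)

lemma aa_nonneg (y : E (n + 1)) (k : Fin n) : 0 ≤ aa n hn y k := Real.sqrt_nonneg _

lemma aa_sq (y : E (n + 1)) (k : Fin n) :
    aa n hn y k ^ 2 = ∑ i ∈ fib n hn k, ‖y i‖ ^ 2 :=
  Real.sq_sqrt (by positivity)

lemma aa_zero {y : E (n + 1)} {k : Fin n} (hk : aa n hn y k = 0) :
    ∀ i ∈ fib n hn k, y i = 0 := by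
  intro i hi
  have hsum : ∑ i ∈ fib n hn k, ‖y i‖ ^ 2 = 0 := by rw [← aa_sq n hn y k, hk]; norm_num
  have h2 := (Finset.sum_eq_zero_iff_of_nonneg (fun i _ => by positivity)).mp hsum i hi
  have h3 : ‖y i‖ = 0 := by simpa using sq_eq_zero_iff.mp h2
  simpa using h3

noncomputable def avv (y : E (n + 1)) : E n := WithLp.toLp 2 (fun k => ((aa n hn y k : ℝ) : ℂ))

lemma avv_apply (y : E (n + 1)) (k : Fin n) : avv n hn y k = ((aa n hn y k : ℝ) : ℂ) := rfl

lemma norm_avv (y : E (n + 1)) : ‖avv n hn y‖ = ‖y‖ := by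
  have h : ‖avv n hn y‖ ^ 2 = ‖y‖ ^ 2 := by
    rw [norm_sq_eq, norm_sq_eq, sum_fib n hn (fun i => ‖y i‖ ^ 2)]
    refine Finset.sum_congr rfl fun k _ => ?_
    rw [avv_apply, show ‖(((aa n hn y k : ℝ) : ℂ))‖ = aa n hn y k by
      rw [Complex.norm_real, Real.norm_eq_abs, abs_of_nonneg (aa_nonneg n hn y k)]]
    exact aa_sq n hn y k
  calc ‖avv n hn y‖ = Real.sqrt (‖avv n hn y‖ ^ 2) := (Real.sqrt_sq (norm_nonneg _)).symm
    _ = Real.sqrt (‖y‖ ^ 2) := by rw [h]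
    _ = ‖y‖ := Real.sqrt_sq (norm_nonneg _)

/-- The compressed contraction. -/
noncomputable def CC (C' : Matrix (Fin (n + 1)) (Fin (n + 1)) ℂ) (y x : E (n + 1)) :
    Matrix (Fin n) (Fin n) ℂ :=
  Matrix.of fun k l =>
    (∑ i ∈ fib n hn k, ∑ j ∈ fib n hn l, (starRingEnd ℂ) (y i) * C' i j * x j)
      / (((aa n hn y k : ℝ) : ℂ) * ((aa n hn x l : ℝ) : ℂ))

lemma CC_spec (C' : Matrix (Fin (n + 1)) (Fin (n + 1)) ℂ) (y x : E (n + 1)) (k l : Fin n) :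
    (∑ i ∈ fib n hn k, ∑ j ∈ fib n hn l, (starRingEnd ℂ) (y i) * C' i j * x j)
      = (((aa n hn y k : ℝ) : ℂ) * ((aa n hn x l : ℝ) : ℂ)) * CC n hn C' y x k l := by
  by_cases hk : aa n hn y k = 0
  · have h1 : (∑ i ∈ fib n hn k, ∑ j ∈ fib n hn l,
        (starRingEnd ℂ) (y i) * C' i j * x j) = 0 :=
      Finset.sum_eq_zero fun i hi => Finset.sum_eq_zero fun j _ => by
        rw [aa_zero n hn hk i hi]; simp
    rw [h1, hk]; simp
  · by_cases hl : aa n hn x l = 0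
    · have h1 : (∑ i ∈ fib n hn k, ∑ j ∈ fib n hn l,
          (starRingEnd ℂ) (y i) * C' i j * x j) = 0 :=
        Finset.sum_eq_zero fun i _ => Finset.sum_eq_zero fun j hj => by
          rw [aa_zero n hn hl j hj]; simp
      rw [h1, hl]; simp
    · have hne : (((aa n hn y k : ℝ) : ℂ) * ((aa n hn x l : ℝ) : ℂ)) ≠ 0 :=
        mul_ne_zero (Complex.ofReal_ne_zero.mpr hk) (Complex.ofReal_ne_zero.mpr hl)
      rw [CC]
      simp only [Matrix.of_apply]
      rw [mul_comm]
      exact (div_mul_cancel₀ _ hne).symm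

lemma CC_contraction (C' : Matrix (Fin (n + 1)) (Fin (n + 1)) ℂ) (hC' : C'.copNorm ≤ 1)
    (y x : E (n + 1)) : (CC n hn C' y x).copNorm ≤ 1 := by
  refine copNorm_le _ zero_le_one fun z => ?_
  rw [one_mul]
  set v : E (n + 1) := WithLp.toLp 2 (fun j => x j * z (f n hn j) / ((aa n hn x (f n hn j) : ℝ) : ℂ)) with hv
  set w : E (n + 1) := app C' v with hw
  have hvz : ∑ j, ‖v j‖ ^ 2 ≤ ∑ l, ‖z l‖ ^ 2 := by
    rw [sum_fib n hn (fun j => ‖v j‖ ^ 2)]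
    refine Finset.sum_le_sum fun l _ => ?_
    by_cases hl : aa n hn x l = 0
    · rw [Finset.sum_eq_zero (fun j hj => by
        simp only [hv, WithLp.ofLp_toLp]; rw [aa_zero n hn hl j hj]; simp)]
      positivity
    · have hvj : ∀ j ∈ fib n hn l,
          ‖v j‖ ^ 2 = ‖x j‖ ^ 2 * ‖z l‖ ^ 2 / (aa n hn x l) ^ 2 := by
        intro j hj
        simp only [hv, WithLp.ofLp_toLp]
        rw [f_mem n hn hj, norm_div, norm_mul]
        rw [Complex.norm_real, Real.norm_eq_abs, abs_of_nonneg (aa_nonneg n hn x l)]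
        rw [div_pow, mul_pow]
      rw [Finset.sum_congr rfl hvj, ← Finset.sum_div, ← Finset.sum_mul, ← aa_sq n hn x l]
      rw [mul_comm, mul_div_assoc, div_self (pow_ne_zero 2 hl), mul_one]
  have hwz : ∑ i, ‖w i‖ ^ 2 ≤ ∑ l, ‖z l‖ ^ 2 := by
    have h1 : ‖w‖ ≤ ‖v‖ := by
      calc ‖w‖ ≤ C'.copNorm * ‖v‖ := norm_app_le _ _
        _ ≤ 1 * ‖v‖ := mul_le_mul_of_nonneg_right hC' (norm_nonneg _)
        _ = ‖v‖ := one_mul _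
    calc ∑ i, ‖w i‖ ^ 2 = ‖w‖ ^ 2 := (norm_sq_eq w).symm
      _ ≤ ‖v‖ ^ 2 := pow_le_pow_left₀ (norm_nonneg _) h1 2
      _ = ∑ j, ‖v j‖ ^ 2 := norm_sq_eq v
      _ ≤ _ := hvz
  have hw_i : ∀ i, w i = ∑ l, (∑ j ∈ fib n hn l, C' i j * x j) * z l
      / ((aa n hn x l : ℝ) : ℂ) := by
    intro i
    rw [hw, app_apply, sum_fib n hn (fun j => C' i j * v j)]
    refine Finset.sum_congr rfl fun l _ => ?_
    rw [Finset.sum_mul, Finset.sum_div]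
    refine Finset.sum_congr rfl fun j hj => ?_
    simp only [hv, WithLp.ofLp_toLp]
    rw [f_mem n hn hj]
    ring
  have hck : ∀ k, ‖app (CC n hn C' y x) z k‖ ^ 2 ≤ ∑ i ∈ fib n hn k, ‖w i‖ ^ 2 := by
    intro k
    by_cases hk : aa n hn y k = 0
    · have h0 : app (CC n hn C' y x) z k = 0 := by
        rw [app_apply]
        refine Finset.sum_eq_zero fun l _ => ?_
        rw [CC]
        simp only [Matrix.of_apply]
        rw [hk]
        simp
      rw [h0]
      simp only [norm_zero]
      rw [zero_pow (by norm_num)]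
      exact Finset.sum_nonneg fun i _ => pow_nonneg (norm_nonneg _) 2
    · have hform : app (CC n hn C' y x) z k
          = (∑ i ∈ fib n hn k, (starRingEnd ℂ) (y i) * w i) / ((aa n hn y k : ℝ) : ℂ) := by
        rw [app_apply]
        calc (∑ l, CC n hn C' y x k l * z l)
            = ∑ l, ∑ i ∈ fib n hn k, (starRingEnd ℂ) (y i)
                * ((∑ j ∈ fib n hn l, C' i j * x j) * z l / ((aa n hn x l : ℝ) : ℂ))
                / ((aa n hn y k : ℝ) : ℂ) := by
              refine Finset.sum_congr rfl fun l _ => ?_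
              rw [CC]
              simp only [Matrix.of_apply]
              rw [show (∑ i ∈ fib n hn k, ∑ j ∈ fib n hn l,
                    (starRingEnd ℂ) (y i) * C' i j * x j)
                  = ∑ i ∈ fib n hn k,
                      (starRingEnd ℂ) (y i) * ∑ j ∈ fib n hn l, C' i j * x j from
                Finset.sum_congr rfl fun i _ => by
                  rw [Finset.mul_sum]
                  exact Finset.sum_congr rfl fun j _ => by ring]
              rw [Finset.sum_div, Finset.sum_mul]
              refine Finset.sum_congr rfl fun i _ => ?_
              simp only [div_eq_mul_inv, mul_inv]
              ring
          _ = ∑ i ∈ fib n hn k, ∑ l, (starRingEnd ℂ) (y i)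
                * ((∑ j ∈ fib n hn l, C' i j * x j) * z l / ((aa n hn x l : ℝ) : ℂ))
                / ((aa n hn y k : ℝ) : ℂ) := Finset.sum_comm
          _ = (∑ i ∈ fib n hn k, (starRingEnd ℂ) (y i) * w i) / ((aa n hn y k : ℝ) : ℂ) := by
              rw [Finset.sum_div]
              refine Finset.sum_congr rfl fun i _ => ?_
              rw [hw_i i, Finset.mul_sum, Finset.sum_div]
      rw [hform, norm_div]
      rw [show ‖((aa n hn y k : ℝ) : ℂ)‖ = aa n hn y k by
        rw [Complex.norm_real, Real.norm_eq_abs, abs_of_nonneg (aa_nonneg n hn y k)]]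
      rw [div_pow]
      have hcs := cs_complex (fib n hn k) (fun i => (starRingEnd ℂ) (y i)) w
      have hconj : ∑ i ∈ fib n hn k, ‖(starRingEnd ℂ) (y i)‖ ^ 2 = aa n hn y k ^ 2 := by
        rw [aa_sq]
        exact Finset.sum_congr rfl fun i _ => by rw [RCLike.norm_conj]
      rw [hconj] at hcs
      have hpos : 0 < aa n hn y k ^ 2 :=
        pow_pos (lt_of_le_of_ne (aa_nonneg n hn y k) (Ne.symm hk)) 2
      calc ‖∑ i ∈ fib n hn k, (starRingEnd ℂ) (y i) * w i‖ ^ 2 / aa n hn y k ^ 2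
          ≤ (aa n hn y k ^ 2 * ∑ i ∈ fib n hn k, ‖w i‖ ^ 2) / aa n hn y k ^ 2 :=
            by gcongr
        _ = ∑ i ∈ fib n hn k, ‖w i‖ ^ 2 := mul_div_cancel_left₀ _ hpos.ne' 
  refine norm_le_of_sq _ (norm_nonneg z) ?_
  calc ∑ k, ‖app (CC n hn C' y x) z k‖ ^ 2
      ≤ ∑ k, ∑ i ∈ fib n hn k, ‖w i‖ ^ 2 := Finset.sum_le_sum fun k _ => hck k
    _ = ∑ i, ‖w i‖ ^ 2 := (sum_fib n hn _).symm
    _ ≤ ∑ l, ‖z l‖ ^ 2 := hwz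
    _ = ‖z‖ ^ 2 := (norm_sq_eq z).symm

lemma pairing (A : Matrix (Fin n) (Fin n) ℂ) (C' : Matrix (Fin (n + 1)) (Fin (n + 1)) ℂ)
    (y x : E (n + 1)) :
    ⟪y, app (Matrix.hadamard (dup n hn A) C') x⟫_ℂ
      = ∑ k, ∑ l, A k l * (((aa n hn y k : ℝ) : ℂ) * ((aa n hn x l : ℝ) : ℂ)
          * CC n hn C' y x k l) := by
  rw [PiLp.inner_apply]
  calc ∑ i, ⟪y i, app (Matrix.hadamard (dup n hn A) C') x i⟫_ℂ
      = ∑ i, (starRingEnd ℂ) (y i) * ∑ j, (dup n hn A i j * C' i j) * x j := by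
        refine Finset.sum_congr rfl fun i _ => ?_
        rw [RCLike.inner_apply', app_apply]
        congr 1
    _ = ∑ i, ∑ j, (starRingEnd ℂ) (y i) * ((dup n hn A i j * C' i j) * x j) :=
        Finset.sum_congr rfl fun i _ => Finset.mul_sum _ _ _
    _ = ∑ k, ∑ i ∈ fib n hn k, ∑ j, (starRingEnd ℂ) (y i)
          * ((dup n hn A i j * C' i j) * x j) := sum_fib n hn _
    _ = ∑ k, ∑ i ∈ fib n hn k, ∑ l, ∑ j ∈ fib n hn l, (starRingEnd ℂ) (y i)
          * ((dup n hn A i j * C' i j) * x j) :=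
        Finset.sum_congr rfl fun k _ => Finset.sum_congr rfl fun i _ => sum_fib n hn _
    _ = ∑ k, ∑ l, ∑ i ∈ fib n hn k, ∑ j ∈ fib n hn l, (starRingEnd ℂ) (y i)
          * ((dup n hn A i j * C' i j) * x j) :=
        Finset.sum_congr rfl fun k _ => Finset.sum_comm
    _ = ∑ k, ∑ l, A k l * ∑ i ∈ fib n hn k, ∑ j ∈ fib n hn l,
          (starRingEnd ℂ) (y i) * C' i j * x j := by
        refine Finset.sum_congr rfl fun k _ => Finset.sum_congr rfl fun l _ => ?_
        rw [Finset.mul_sum]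
        refine Finset.sum_congr rfl fun i hi => ?_
        rw [Finset.mul_sum]
        refine Finset.sum_congr rfl fun j hj => ?_
        have hd : dup n hn A i j = A k l := by
          rw [dup]
          simp only [Matrix.of_apply]
          rw [f_mem n hn hi, f_mem n hn hj]
        rw [hd]
        ring
    _ = _ :=
        Finset.sum_congr rfl fun k _ => Finset.sum_congr rfl fun l _ => by
          rw [CC_spec n hn C' y x k l]

lemma pairing' (A C : Matrix (Fin n) (Fin n) ℂ) (av bv : E n) :
    ⟪av, app (Matrix.hadamard A C) bv⟫_ℂ
      = ∑ k, ∑ l, A k l * ((starRingEnd ℂ) (av k) * bv l * C k l) := by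
  rw [PiLp.inner_apply]
  calc ∑ k, ⟪av k, app (Matrix.hadamard A C) bv k⟫_ℂ
      = ∑ k, (starRingEnd ℂ) (av k) * ∑ l, (A k l * C k l) * bv l := by
        refine Finset.sum_congr rfl fun k _ => ?_
        rw [RCLike.inner_apply', app_apply]
        congr 1
    _ = ∑ k, ∑ l, (starRingEnd ℂ) (av k) * ((A k l * C k l) * bv l) :=
        Finset.sum_congr rfl fun k _ => Finset.mul_sum _ _ _
    _ = _ :=
        Finset.sum_congr rfl fun k _ => Finset.sum_congr rfl fun l _ => by ring

lemma main_le (A : Matrix (Fin n) (Fin n) ℂ) (C' : Matrix (Fin (n + 1)) (Fin (n + 1)) ℂ)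
    (hC' : C'.copNorm ≤ 1) :
    (Matrix.hadamard (dup n hn A) C').copNorm ≤ A.schurNorm := by
  refine copNorm_le _ (schurNorm_nonneg A) fun x => ?_
  set y : E (n + 1) := app (Matrix.hadamard (dup n hn A) C') x with hy
  set C : Matrix (Fin n) (Fin n) ℂ := CC n hn C' y x with hC
  set av : E n := avv n hn y with havdef
  set bv : E n := avv n hn x with hbvdef
  have hmemA : Matrix.copNorm (Matrix.hadamard A C) ≤ A.schurNorm :=
    le_csSup (bddAbove_sset A) ⟨C, CC_contraction n hn C' hC' y x, rfl⟩
  have hconj : ∀ k, (starRingEnd ℂ) (av k) = ((aa n hn y k : ℝ) : ℂ) := fun k => by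
    rw [havdef, avv_apply]; exact Complex.conj_ofReal _
  have key : ⟪y, y⟫_ℂ = ⟪av, app (Matrix.hadamard A C) bv⟫_ℂ := by
    calc ⟪y, y⟫_ℂ = ⟪y, app (Matrix.hadamard (dup n hn A) C') x⟫_ℂ := congrArg _ hy
      _ = ∑ k, ∑ l, A k l * (((aa n hn y k : ℝ) : ℂ) * ((aa n hn x l : ℝ) : ℂ)
            * CC n hn C' y x k l) := pairing n hn A C' y x
      _ = ∑ k, ∑ l, A k l * ((starRingEnd ℂ) (av k) * bv l * C k l) := by
          refine Finset.sum_congr rfl fun k _ => Finset.sum_congr rfl fun l _ => ?_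
          rw [hconj k, hbvdef, avv_apply, hC]
      _ = _ := (pairing' n A C av bv).symm
  have hfin : ‖y‖ ^ 2 ≤ ‖y‖ * (A.schurNorm * ‖x‖) := by
    have e1 : (‖y‖ : ℝ) ^ 2 = ‖⟪av, app (Matrix.hadamard A C) bv⟫_ℂ‖ := by
      rw [← key, inner_self_eq_norm_sq_to_K]
      rw [norm_pow, RCLike.norm_ofReal, abs_norm]
    rw [e1]
    calc ‖⟪av, app (Matrix.hadamard A C) bv⟫_ℂ‖
        ≤ ‖av‖ * ‖app (Matrix.hadamard A C) bv‖ := norm_inner_le_norm _ _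
      _ ≤ ‖av‖ * (Matrix.copNorm (Matrix.hadamard A C) * ‖bv‖) :=
          mul_le_mul_of_nonneg_left (norm_app_le _ _) (norm_nonneg _)
      _ = ‖y‖ * (Matrix.copNorm (Matrix.hadamard A C) * ‖x‖) := by
          rw [havdef, hbvdef, norm_avv n hn y, norm_avv n hn x]
      _ ≤ ‖y‖ * (A.schurNorm * ‖x‖) :=
          mul_le_mul_of_nonneg_left
            (mul_le_mul_of_nonneg_right hmemA (norm_nonneg x)) (norm_nonneg y)
  rcases (norm_nonneg y).eq_or_lt with h0 | h0
  · rw [← h0]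
    exact mul_nonneg (schurNorm_nonneg A) (norm_nonneg x)
  · nlinarith [hfin]

lemma schurNorm_dup (A : Matrix (Fin n) (Fin n) ℂ) :
    (dup n hn A).schurNorm = A.schurNorm := by
  refine le_antisymm ?_ (schurNorm_le_dup n hn A)
  rw [schurNorm_eq]
  refine csSup_le ⟨0, zero_mem_sset _⟩ ?_
  rintro s ⟨C', hC', rfl⟩
  exact main_le n hn A C' hC'

end Main


end Schur


/-- For every `n × n` sign matrix `M` there is an `(n+1) × (n+1)` sign matrix with the same
Schur norm; i.e. `σ_n ⊆ σ_{n+1}`. -/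
theorem schur_spectrum_mono (n : ℕ) (hn : 0 < n) (M : Matrix (Fin n) (Fin n) ℝ)
    (hM : ∀ i j, M i j = 1 ∨ M i j = -1) :
    ∃ N : Matrix (Fin (n + 1)) (Fin (n + 1)) ℝ, (∀ i j, N i j = 1 ∨ N i j = -1) ∧
      Matrix.schurNorm (N.map Complex.ofReal) = Matrix.schurNorm (M.map Complex.ofReal) := by
  refine ⟨Matrix.of fun i j => M (Schur.f n hn i) (Schur.f n hn j), fun i j => hM _ _, ?_⟩
  have h : (Matrix.of fun i j => M (Schur.f n hn i) (Schur.f n hn j)).map Complex.ofReal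
      = Schur.dup n hn (M.map Complex.ofReal) := by
    ext i j
    simp [Schur.dup, Matrix.map_apply]
  rw [h, Schur.schurNorm_dup]
end
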